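/- arXiv:1002.4463 — 7 statements merged into one kernel-verified Lean document; each statement's English description precedes it below -/
import Mathlib

section
/- Let n1, n2, n2', n3, n3', n4, n5, m1, m1', m2, m3, m4, m4', m5 be natural numbers such that in ℤ^4 one has n1·s1 + (n2 − n2')·s2 + (n3 − n3')·s3 + n4·s4 + n5·s5 = (m1 − m1')·s1 + m2·s2 + m3·s3 + (m4 − m4')·s4 + m5·s5 (here the differences are taken in ℤ and the equation holds coordinatewise). Assume that s12 and s42 are not both zero, and that s24 and s34 are not both zero. Then at least one of the four integers n2 − n2', n3 − n3', m1 − m1', m4 − m4' is nonnegative. (Claim 1 in the proof of Lemma 3.5, the case m = 4.) -/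
/-- Claim 1 in the proof of Lemma 3.5 (the case `m = 4`).

Generators in `ℤ^4` (Hochster-transformed form):
`s1 = (0, s12, s13, 0)`, `s2 = (0, 0, s23, s24)`, `s3 = (s31, 0, 0, s34)`,
`s4 = (s41, s42, 0, 0)`, and `s5 ∈ ℤ^4` with all coordinates nonnegative.
If
`n1·s1 + (n2 − n2')·s2 + (n3 − n3')·s3 + n4·s4 + n5·s5
  = (m1 − m1')·s1 + m2·s2 + m3·s3 + (m4 − m4')·s4 + m5·s5`,
`s12, s42` not both zero and `s24, s34` not both zero, then at least one of
`n2 − n2'`, `n3 − n3'`, `m1 − m1'`, `m4 − m4'` is nonnegative. -/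
theorem stmt0 (s12 s13 s23 s24 s31 s34 s41 s42 : ℕ)
    (s5 : Fin 4 → ℤ) (hs5 : ∀ i, 0 ≤ s5 i)
    (s1 s2 s3 s4 : Fin 4 → ℤ)
    (hs1 : s1 = ![0, (s12 : ℤ), (s13 : ℤ), 0])
    (hs2 : s2 = ![0, 0, (s23 : ℤ), (s24 : ℤ)])
    (hs3 : s3 = ![(s31 : ℤ), 0, 0, (s34 : ℤ)])
    (hs4 : s4 = ![(s41 : ℤ), (s42 : ℤ), 0, 0])
    (h2 : ¬ (s12 = 0 ∧ s42 = 0)) (h4 : ¬ (s24 = 0 ∧ s34 = 0))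
    (n1 n2 n2' n3 n3' n4 n5 m1 m1' m2 m3 m4 m4' m5 : ℕ)
    (heq : (n1 : ℤ) • s1 + ((n2 : ℤ) - (n2' : ℤ)) • s2 + ((n3 : ℤ) - (n3' : ℤ)) • s3
            + (n4 : ℤ) • s4 + (n5 : ℤ) • s5
          = ((m1 : ℤ) - (m1' : ℤ)) • s1 + (m2 : ℤ) • s2 + (m3 : ℤ) • s3
            + ((m4 : ℤ) - (m4' : ℤ)) • s4 + (m5 : ℤ) • s5) :
    0 ≤ (n2 : ℤ) - (n2' : ℤ) ∨ 0 ≤ (n3 : ℤ) - (n3' : ℤ)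
      ∨ 0 ≤ (m1 : ℤ) - (m1' : ℤ) ∨ 0 ≤ (m4 : ℤ) - (m4' : ℤ) := by
  by_contra h
  push_neg at h
  obtain ⟨ha, hb, hc, hd⟩ := h
  have e1 := congrFun heq 1
  have e3 := congrFun heq 3
  simp [hs1, hs2, hs3, hs4, Pi.add_apply, Pi.smul_apply, smul_eq_mul] at e1 e3
  have h2' : (1 : ℤ) ≤ (s12 : ℤ) + (s42 : ℤ) := by
    have : 0 < s12 + s42 := by omega
    push_cast; omega
  have h4' : (1 : ℤ) ≤ (s24 : ℤ) + (s34 : ℤ) := by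
    have : 0 < s24 + s34 := by omega
    push_cast; omega
  have t1 : (0:ℤ) ≤ s5 1 := hs5 1
  have t3 : (0:ℤ) ≤ s5 3 := hs5 3
  have ha' : (n2 : ℤ) - n2' ≤ -1 := by omega
  have hb' : (n3 : ℤ) - n3' ≤ -1 := by omega
  have hc' : (m1 : ℤ) - m1' ≤ -1 := by omega
  have hd' : (m4 : ℤ) - m4' ≤ -1 := by omega
  rcases le_total (n5:ℤ) (m5:ℤ) with hle | hle
  · linarith [mul_nonneg (Int.natCast_nonneg m2) (Int.natCast_nonneg s24),
      mul_nonneg (Int.natCast_nonneg m3) (Int.natCast_nonneg s34),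
      mul_le_mul_of_nonneg_right hle t3,
      mul_le_mul_of_nonneg_right ha' (Int.natCast_nonneg s24),
      mul_le_mul_of_nonneg_right hb' (Int.natCast_nonneg s34)]
  · linarith [mul_nonneg (Int.natCast_nonneg n1) (Int.natCast_nonneg s12),
      mul_nonneg (Int.natCast_nonneg n4) (Int.natCast_nonneg s42),
      mul_le_mul_of_nonneg_right hle t1,
      mul_le_mul_of_nonneg_right hc' (Int.natCast_nonneg s12),
      mul_le_mul_of_nonneg_right hd' (Int.natCast_nonneg s42)]
end

section
/- S_2 ∩ S_4 ⊆ S_1 ∪ S_3; equivalently, the set G_{{1,3}} = (S_2 ∩ S_4) \ (S_1 ∪ S_3) is empty. (The assertion G_{13} = ∅ proved in Lemma 3.5, the case m = 4.) -/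
/-- For a submonoid `S` of `ℤ^n` and a coordinate `i`, the paper's set
`S_i = S − S_{(i)}`, where `S_{(i)}`-differences are taken against the subgroup `H_i`
generated by `S ∩ F_i` with `F_i = {x : x_i = 0}`. -/
def paperSi {n : ℕ} (S : AddSubmonoid (Fin n → ℤ)) (i : Fin n) : Set (Fin n → ℤ) :=
  {x | ∃ s ∈ S, ∃ t ∈ AddSubgroup.closure {y : Fin n → ℤ | y ∈ S ∧ y i = 0}, x = s - t}

/-- The subgroup of `ℤ^4` generated by two vectors, as an explicit set of combinations. -/
def spanTwo (u v : Fin 4 → ℤ) : AddSubgroup (Fin 4 → ℤ) where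
  carrier := {t | ∃ a b : ℤ, t = a • u + b • v}
  zero_mem' := ⟨0, 0, by simp⟩
  add_mem' := by
    rintro x y ⟨a, b, rfl⟩ ⟨c, d, rfl⟩
    exact ⟨a + c, b + d, by rw [add_smul, add_smul]; abel⟩
  neg_mem' := by
    rintro x ⟨a, b, rfl⟩
    exact ⟨-a, -b, by rw [neg_smul, neg_smul]; abel⟩

lemma arith13 (a12 a42 a24 a34 q1 q3 n1 n4 n5 m2 m3 m5 k2 k3 l1 l4 : ℤ)
    (h12 : 0 < a12) (h42 : 0 < a42) (h24 : 0 < a24) (h34 : 0 < a34)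
    (hq1 : 0 < q1) (hq3 : 0 < q3)
    (hn1 : 0 ≤ n1) (hn4 : 0 ≤ n4) (hn5 : 0 ≤ n5) (hm2 : 0 ≤ m2) (hm3 : 0 ≤ m3)
    (hk2 : k2 < 0) (hk3 : k3 < 0) (hl1 : l1 < 0) (hl4 : l4 < 0)
    (E1 : n1 * a12 + n4 * a42 + n5 * q1 = l1 * a12 + l4 * a42 + m5 * q1)
    (E3 : k2 * a24 + k3 * a34 + n5 * q3 = m2 * a24 + m3 * a34 + m5 * q3) : False := by
  have h5 : n5 < m5 := by
    nlinarith [mul_pos (show (0:ℤ) < n1 - l1 by linarith) h12,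
      mul_pos (show (0:ℤ) < n4 - l4 by linarith) h42]
  nlinarith [mul_pos (show (0:ℤ) < m2 - k2 by linarith) h24,
    mul_pos (show (0:ℤ) < m3 - k3 by linarith) h34,
    mul_pos (show (0:ℤ) < m5 - n5 by linarith) hq3]

/-- The assertion `G_{13} = ∅` in Lemma 3.5 (the case `m = 4`): with the
Hochster-transformed generators `s1 = (0, s12, s13, 0)`, `s2 = (0, 0, s23, s24)`,
`s3 = (s31, 0, 0, s34)`, `s4 = (s41, s42, 0, 0)` and `s5` with all coordinates
positive, one has `S_2 ∩ S_4 ⊆ S_1 ∪ S_3`, i.e.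
`G_{{1,3}} = (S_2 ∩ S_4) \ (S_1 ∪ S_3) = ∅`.
(Coordinates `1,2,3,4` of the paper correspond to the indices `0,1,2,3` of `Fin 4`.) -/
theorem stmt1 (s12 s13 s23 s24 s31 s34 s41 s42 : ℕ)
    (hpos : 0 < s12 ∧ 0 < s13 ∧ 0 < s23 ∧ 0 < s24 ∧ 0 < s31 ∧ 0 < s34 ∧ 0 < s41 ∧ 0 < s42)
    (s5 : Fin 4 → ℤ) (hs5 : ∀ i, 0 < s5 i)
    (s1 s2 s3 s4 : Fin 4 → ℤ)
    (hs1 : s1 = ![0, (s12 : ℤ), (s13 : ℤ), 0])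
    (hs2 : s2 = ![0, 0, (s23 : ℤ), (s24 : ℤ)])
    (hs3 : s3 = ![(s31 : ℤ), 0, 0, (s34 : ℤ)])
    (hs4 : s4 = ![(s41 : ℤ), (s42 : ℤ), 0, 0])
    (S : AddSubmonoid (Fin 4 → ℤ))
    (hS : S = AddSubmonoid.closure {s1, s2, s3, s4, s5}) :
    (paperSi S 1 ∩ paperSi S 3 ⊆ paperSi S 0 ∪ paperSi S 2) ∧
      (paperSi S 1 ∩ paperSi S 3) \ (paperSi S 0 ∪ paperSi S 2) = ∅ := by
  obtain ⟨h12, h13, h23, h24, h31, h34, h41, h42⟩ := hpos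
  have z12 : (0:ℤ) < (s12:ℤ) := by exact_mod_cast h12
  have z24 : (0:ℤ) < (s24:ℤ) := by exact_mod_cast h24
  have z34 : (0:ℤ) < (s34:ℤ) := by exact_mod_cast h34
  have z42 : (0:ℤ) < (s42:ℤ) := by exact_mod_cast h42
  -- generators belong to S
  have hs1S : s1 ∈ S := by rw [hS]; exact AddSubmonoid.subset_closure (by simp)
  have hs2S : s2 ∈ S := by rw [hS]; exact AddSubmonoid.subset_closure (by simp)
  have hs3S : s3 ∈ S := by rw [hS]; exact AddSubmonoid.subset_closure (by simp)
  have hs4S : s4 ∈ S := by rw [hS]; exact AddSubmonoid.subset_closure (by simp)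
  have hs5S : s5 ∈ S := by rw [hS]; exact AddSubmonoid.subset_closure (by simp)
  -- nonnegative integer multiples stay in S
  have hsmulS : ∀ k : ℤ, 0 ≤ k → ∀ v ∈ S, k • v ∈ S := by
    intro k hk v hv
    lift k to ℕ using hk
    rw [natCast_zsmul]
    exact nsmul_mem hv k
  -- every element of S is a nonnegative combination of the generators
  have hrep : ∀ x ∈ S, ∃ n1 n2 n3 n4 n5 : ℕ,
      x = n1 • s1 + n2 • s2 + n3 • s3 + n4 • s4 + n5 • s5 := by
    rw [hS]
    intro x hx
    induction hx using AddSubmonoid.closure_induction with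
    | mem y hy =>
      rcases hy with h | h | h | h | h <;> subst h
      · exact ⟨1,0,0,0,0, by simp⟩
      · exact ⟨0,1,0,0,0, by simp⟩
      · exact ⟨0,0,1,0,0, by simp⟩
      · exact ⟨0,0,0,1,0, by simp⟩
      · exact ⟨0,0,0,0,1, by simp⟩
    | zero => exact ⟨0,0,0,0,0, by simp⟩
    | add y z _ _ hy hz =>
      obtain ⟨a1,a2,a3,a4,a5,rfl⟩ := hy
      obtain ⟨b1,b2,b3,b4,b5,rfl⟩ := hz
      exact ⟨a1+b1, a2+b2, a3+b3, a4+b4, a5+b5, by simp only [add_smul]; abel⟩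
  -- Forward characterization of `paperSi S 1`
  have hS1 : ∀ x ∈ paperSi S 1, ∃ (n1 n4 n5 : ℕ) (k2 k3 : ℤ),
      x = (n1:ℤ) • s1 + k2 • s2 + k3 • s3 + (n4:ℤ) • s4 + (n5:ℤ) • s5 := by
    rintro x ⟨s, hs, t, ht, rfl⟩
    obtain ⟨n1, n2, n3, n4, n5, rfl⟩ := hrep s hs
    have htc : ∃ a b : ℤ, t = a • s2 + b • s3 := by
      refine (AddSubgroup.closure_le (spanTwo s2 s3)).mpr ?_ ht
      rintro y ⟨hyS, hy1⟩
      obtain ⟨m1, m2, m3, m4, m5, rfl⟩ := hrep y hyS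
      have e1 := hy1
      simp [hs1, hs2, hs3, hs4] at e1
      have t1 : (0:ℤ) ≤ (m1:ℤ) * s12 := by positivity
      have t4 : (0:ℤ) ≤ (m4:ℤ) * s42 := by positivity
      have t5 : (0:ℤ) ≤ (m5:ℤ) * s5 1 := mul_nonneg (by positivity) (hs5 1).le
      have hm1 : (m1:ℤ) * s12 = 0 := by linarith
      have hm4 : (m4:ℤ) * s42 = 0 := by linarith
      have hm5 : (m5:ℤ) * s5 1 = 0 := by linarith
      have hm1' : m1 = 0 := by
        rcases mul_eq_zero.mp hm1 with h | h
        · exact_mod_cast h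
        · exact absurd h z12.ne'
      have hm4' : m4 = 0 := by
        rcases mul_eq_zero.mp hm4 with h | h
        · exact_mod_cast h
        · exact absurd h z42.ne'
      have hm5' : m5 = 0 := by
        rcases mul_eq_zero.mp hm5 with h | h
        · exact_mod_cast h
        · exact absurd h (hs5 1).ne'
      subst hm1' hm4' hm5'
      exact ⟨(m2:ℤ), (m3:ℤ), by simp [natCast_zsmul]⟩
    obtain ⟨a, b, rfl⟩ := htc
    exact ⟨n1, n4, n5, (n2:ℤ) - a, (n3:ℤ) - b, by
      simp only [sub_smul, natCast_zsmul]; abel⟩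
  -- Forward characterization of `paperSi S 3`
  have hS3 : ∀ x ∈ paperSi S 3, ∃ (m2 m3 m5 : ℕ) (l1 l4 : ℤ),
      x = l1 • s1 + (m2:ℤ) • s2 + (m3:ℤ) • s3 + l4 • s4 + (m5:ℤ) • s5 := by
    rintro x ⟨s, hs, t, ht, rfl⟩
    obtain ⟨n1, n2, n3, n4, n5, rfl⟩ := hrep s hs
    have htc : ∃ a b : ℤ, t = a • s1 + b • s4 := by
      refine (AddSubgroup.closure_le (spanTwo s1 s4)).mpr ?_ ht
      rintro y ⟨hyS, hy3⟩
      obtain ⟨m1, m2, m3, m4, m5, rfl⟩ := hrep y hyS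
      have e3 := hy3
      simp [hs1, hs2, hs3, hs4] at e3
      have t2 : (0:ℤ) ≤ (m2:ℤ) * s24 := by positivity
      have t3 : (0:ℤ) ≤ (m3:ℤ) * s34 := by positivity
      have t5 : (0:ℤ) ≤ (m5:ℤ) * s5 3 := mul_nonneg (by positivity) (hs5 3).le
      have hm2 : (m2:ℤ) * s24 = 0 := by linarith
      have hm3 : (m3:ℤ) * s34 = 0 := by linarith
      have hm5 : (m5:ℤ) * s5 3 = 0 := by linarith
      have hm2' : m2 = 0 := by
        rcases mul_eq_zero.mp hm2 with h | h
        · exact_mod_cast h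
        · exact absurd h z24.ne'
      have hm3' : m3 = 0 := by
        rcases mul_eq_zero.mp hm3 with h | h
        · exact_mod_cast h
        · exact absurd h z34.ne'
      have hm5' : m5 = 0 := by
        rcases mul_eq_zero.mp hm5 with h | h
        · exact_mod_cast h
        · exact absurd h (hs5 3).ne'
      subst hm2' hm3' hm5'
      exact ⟨(m1:ℤ), (m4:ℤ), by simp [natCast_zsmul]⟩
    obtain ⟨a, b, rfl⟩ := htc
    exact ⟨n2, n3, n5, (n1:ℤ) - a, (n4:ℤ) - b, by
      simp only [sub_smul, natCast_zsmul]; abel⟩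
  -- Backward: building membership in `paperSi S 0`
  have hg1_0 : s1 ∈ AddSubgroup.closure {y : Fin 4 → ℤ | y ∈ S ∧ y 0 = 0} :=
    AddSubgroup.subset_closure ⟨hs1S, by simp [hs1]⟩
  have hg2_0 : s2 ∈ AddSubgroup.closure {y : Fin 4 → ℤ | y ∈ S ∧ y 0 = 0} :=
    AddSubgroup.subset_closure ⟨hs2S, by simp [hs2]⟩
  have hg3_2 : s3 ∈ AddSubgroup.closure {y : Fin 4 → ℤ | y ∈ S ∧ y 2 = 0} :=
    AddSubgroup.subset_closure ⟨hs3S, by simp [hs3]⟩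
  have hg4_2 : s4 ∈ AddSubgroup.closure {y : Fin 4 → ℤ | y ∈ S ∧ y 2 = 0} :=
    AddSubgroup.subset_closure ⟨hs4S, by simp [hs4]⟩
  have hS0in : ∀ a1 a2 a3 a4 a5 : ℤ, 0 ≤ a3 → 0 ≤ a4 → 0 ≤ a5 →
      a1 • s1 + a2 • s2 + a3 • s3 + a4 • s4 + a5 • s5 ∈ paperSi S 0 := by
    intro a1 a2 a3 a4 a5 h3 h4 h5
    refine ⟨a3 • s3 + a4 • s4 + a5 • s5,
      add_mem (add_mem (hsmulS a3 h3 s3 hs3S) (hsmulS a4 h4 s4 hs4S)) (hsmulS a5 h5 s5 hs5S),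
      -(a1 • s1 + a2 • s2),
      neg_mem (add_mem (AddSubgroup.zsmul_mem _ hg1_0 a1) (AddSubgroup.zsmul_mem _ hg2_0 a2)),
      by rw [sub_neg_eq_add]; abel⟩
  have hS2in : ∀ a1 a2 a3 a4 a5 : ℤ, 0 ≤ a1 → 0 ≤ a2 → 0 ≤ a5 →
      a1 • s1 + a2 • s2 + a3 • s3 + a4 • s4 + a5 • s5 ∈ paperSi S 2 := by
    intro a1 a2 a3 a4 a5 h1 h2 h5
    refine ⟨a1 • s1 + a2 • s2 + a5 • s5,
      add_mem (add_mem (hsmulS a1 h1 s1 hs1S) (hsmulS a2 h2 s2 hs2S)) (hsmulS a5 h5 s5 hs5S),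
      -(a3 • s3 + a4 • s4),
      neg_mem (add_mem (AddSubgroup.zsmul_mem _ hg3_2 a3) (AddSubgroup.zsmul_mem _ hg4_2 a4)),
      by rw [sub_neg_eq_add]; abel⟩
  -- the main inclusion
  have key : paperSi S 1 ∩ paperSi S 3 ⊆ paperSi S 0 ∪ paperSi S 2 := by
    rintro x ⟨hx1, hx3⟩
    obtain ⟨n1, n4, n5, k2, k3, hA⟩ := hS1 x hx1
    obtain ⟨m2, m3, m5, l1, l4, hB⟩ := hS3 x hx3
    rcases le_or_gt 0 k2 with hk2 | hk2
    · rw [hA]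
      exact Or.inr (hS2in ((n1:ℤ)) k2 k3 ((n4:ℤ)) ((n5:ℤ)) (Int.natCast_nonneg n1) hk2
        (Int.natCast_nonneg n5))
    rcases le_or_gt 0 k3 with hk3 | hk3
    · rw [hA]
      exact Or.inl (hS0in ((n1:ℤ)) k2 k3 ((n4:ℤ)) ((n5:ℤ)) hk3 (Int.natCast_nonneg n4)
        (Int.natCast_nonneg n5))
    rcases le_or_gt 0 l1 with hl1 | hl1
    · rw [hB]
      exact Or.inr (hS2in l1 ((m2:ℤ)) ((m3:ℤ)) l4 ((m5:ℤ)) hl1 (Int.natCast_nonneg m2)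
        (Int.natCast_nonneg m5))
    rcases le_or_gt 0 l4 with hl4 | hl4
    · rw [hB]
      exact Or.inl (hS0in l1 ((m2:ℤ)) ((m3:ℤ)) l4 ((m5:ℤ)) (Int.natCast_nonneg m3) hl4
        (Int.natCast_nonneg m5))
    exfalso
    have hE := hA.symm.trans hB
    have E1 := congrFun hE 1
    have E3 := congrFun hE 3
    simp [hs1, hs2, hs3, hs4] at E1 E3
    have hn1 : (0:ℤ) ≤ (n1:ℤ) := by positivity
    have hn4 : (0:ℤ) ≤ (n4:ℤ) := by positivity
    have hn5 : (0:ℤ) ≤ (n5:ℤ) := by positivity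
    have hm2 : (0:ℤ) ≤ (m2:ℤ) := by positivity
    have hm3 : (0:ℤ) ≤ (m3:ℤ) := by positivity
    have hq1 := hs5 1
    have hq3 := hs5 3
    exact arith13 s12 s42 s24 s34 (s5 1) (s5 3) n1 n4 n5 m2 m3 m5 k2 k3 l1 l4
      z12 z42 z24 z34 hq1 hq3 hn1 hn4 hn5 hm2 hm3 hk2 hk3 hl1 hl4 E1 E3
  exact ⟨key, Set.diff_eq_empty.mpr key⟩
end

section
/- S_1 ∩ S_3 ⊆ S_2 ∪ S_4; equivalently, the set G_{{2,4}} = (S_1 ∩ S_3) \ (S_2 ∪ S_4) is empty. (The assertion G_{24} = ∅ in Lemma 3.5, the case m = 4.) -/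
set_option maxHeartbeats 1000000 in
/-- The assertion `G_{24} = ∅` in Lemma 3.5 (the case `m = 4`): with the
Hochster-transformed generators `s1 = (0, s12, s13, 0)`, `s2 = (0, 0, s23, s24)`,
`s3 = (s31, 0, 0, s34)`, `s4 = (s41, s42, 0, 0)` and `s5` with all coordinates
positive, one has `S_1 ∩ S_3 ⊆ S_2 ∪ S_4`, i.e.
`G_{{2,4}} = (S_1 ∩ S_3) \ (S_2 ∪ S_4) = ∅`.
(Coordinates `1,2,3,4` of the paper correspond to the indices `0,1,2,3` of `Fin 4`.) -/
theorem stmt2 (s12 s13 s23 s24 s31 s34 s41 s42 : ℕ)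
    (hpos : 0 < s12 ∧ 0 < s13 ∧ 0 < s23 ∧ 0 < s24 ∧ 0 < s31 ∧ 0 < s34 ∧ 0 < s41 ∧ 0 < s42)
    (s5 : Fin 4 → ℤ) (hs5 : ∀ i, 0 < s5 i)
    (s1 s2 s3 s4 : Fin 4 → ℤ)
    (hs1 : s1 = ![0, (s12 : ℤ), (s13 : ℤ), 0])
    (hs2 : s2 = ![0, 0, (s23 : ℤ), (s24 : ℤ)])
    (hs3 : s3 = ![(s31 : ℤ), 0, 0, (s34 : ℤ)])
    (hs4 : s4 = ![(s41 : ℤ), (s42 : ℤ), 0, 0])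
    (S : AddSubmonoid (Fin 4 → ℤ))
    (hS : S = AddSubmonoid.closure {s1, s2, s3, s4, s5}) :
    (paperSi S 0 ∩ paperSi S 2 ⊆ paperSi S 1 ∪ paperSi S 3) ∧
      (paperSi S 0 ∩ paperSi S 2) \ (paperSi S 1 ∪ paperSi S 3) = ∅ := by
  obtain ⟨h12, h13, h23, h24, h31, h34, h41, h42⟩ := hpos
  have m1 : s1 ∈ S := by rw [hS]; exact AddSubmonoid.subset_closure (by simp)
  have m2 : s2 ∈ S := by rw [hS]; exact AddSubmonoid.subset_closure (by simp)
  have m3 : s3 ∈ S := by rw [hS]; exact AddSubmonoid.subset_closure (by simp)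
  have m4 : s4 ∈ S := by rw [hS]; exact AddSubmonoid.subset_closure (by simp)
  have m5 : s5 ∈ S := by rw [hS]; exact AddSubmonoid.subset_closure (by simp)
  -- every element of S is a ℕ-combination of the generators
  have memS : ∀ x ∈ S, ∃ α β γ δ ε : ℕ,
      x = (α : ℤ) • s1 + (β : ℤ) • s2 + (γ : ℤ) • s3 + (δ : ℤ) • s4 + (ε : ℤ) • s5 := by
    intro x hx
    rw [hS] at hx
    induction hx using AddSubmonoid.closure_induction with
    | mem y hy =>
      simp only [Set.mem_insert_iff, Set.mem_singleton_iff] at hy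
      rcases hy with rfl | rfl | rfl | rfl | rfl
      · exact ⟨1, 0, 0, 0, 0, by push_cast; module⟩
      · exact ⟨0, 1, 0, 0, 0, by push_cast; module⟩
      · exact ⟨0, 0, 1, 0, 0, by push_cast; module⟩
      · exact ⟨0, 0, 0, 1, 0, by push_cast; module⟩
      · exact ⟨0, 0, 0, 0, 1, by push_cast; module⟩
    | zero => exact ⟨0, 0, 0, 0, 0, by push_cast; module⟩
    | add x y _ _ ihx ihy =>
      obtain ⟨a1, b1, c1, d1, e1, h1⟩ := ihx
      obtain ⟨a2, b2, c2, d2, e2, h2⟩ := ihy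
      exact ⟨a1 + a2, b1 + b2, c1 + c2, d1 + d2, e1 + e2, by
        rw [h1, h2]; push_cast; module⟩
  -- smul membership helper
  have smem : ∀ w ∈ S, ∀ k : ℤ, 0 ≤ k → k • w ∈ S := by
    intro w hw k hk
    lift k to ℕ using hk
    simpa [natCast_zsmul] using S.nsmul_mem hw k
  -- elements of H₀ are ℤ-combinations of s1, s2
  have hH0 : ∀ t ∈ AddSubgroup.closure {y : Fin 4 → ℤ | y ∈ S ∧ y 0 = 0},
      ∃ m n : ℤ, t = m • s1 + n • s2 := by
    intro t ht
    induction ht using AddSubgroup.closure_induction with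
    | mem y hy =>
      obtain ⟨hyS, hy0⟩ := hy
      obtain ⟨α, β, γ, δ, ε, hrep⟩ := memS y hyS
      have h0 : (γ : ℤ) * s31 + (δ : ℤ) * s41 + (ε : ℤ) * s5 0 = 0 := by
        have hc := congrFun hrep 0
        rw [hy0] at hc
        simp [hs1, hs2, hs3, hs4] at hc
        linarith
      have t1 : (0:ℤ) ≤ (γ : ℤ) * s31 := by positivity
      have t2 : (0:ℤ) ≤ (δ : ℤ) * s41 := by positivity
      have t3 : (0:ℤ) ≤ (ε : ℤ) * s5 0 := mul_nonneg (by positivity) (hs5 0).le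
      have hγ : (γ : ℤ) = 0 := by
        rcases mul_eq_zero.mp (by linarith : (γ : ℤ) * s31 = 0) with h | h
        · exact h
        · exact absurd h (by exact_mod_cast h31.ne')
      have hδ : (δ : ℤ) = 0 := by
        rcases mul_eq_zero.mp (by linarith : (δ : ℤ) * s41 = 0) with h | h
        · exact h
        · exact absurd h (by exact_mod_cast h41.ne')
      have hε : (ε : ℤ) = 0 := by
        rcases mul_eq_zero.mp (by linarith : (ε : ℤ) * s5 0 = 0) with h | h
        · exact h
        · exact absurd h (hs5 0).ne'
      exact ⟨α, β, by rw [hrep, hγ, hδ, hε]; module⟩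
    | zero => exact ⟨0, 0, by module⟩
    | add a b _ _ iha ihb =>
      obtain ⟨m1', n1', h1⟩ := iha
      obtain ⟨m2', n2', h2⟩ := ihb
      exact ⟨m1' + m2', n1' + n2', by rw [h1, h2]; module⟩
    | neg a _ iha =>
      obtain ⟨m', n', h1⟩ := iha
      exact ⟨-m', -n', by rw [h1]; module⟩
  -- elements of H₂ are ℤ-combinations of s3, s4
  have hH2 : ∀ t ∈ AddSubgroup.closure {y : Fin 4 → ℤ | y ∈ S ∧ y 2 = 0},
      ∃ m n : ℤ, t = m • s3 + n • s4 := by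
    intro t ht
    induction ht using AddSubgroup.closure_induction with
    | mem y hy =>
      obtain ⟨hyS, hy0⟩ := hy
      obtain ⟨α, β, γ, δ, ε, hrep⟩ := memS y hyS
      have h0 : (α : ℤ) * s13 + (β : ℤ) * s23 + (ε : ℤ) * s5 2 = 0 := by
        have hc := congrFun hrep 2
        rw [hy0] at hc
        simp [hs1, hs2, hs3, hs4] at hc
        linarith
      have t1 : (0:ℤ) ≤ (α : ℤ) * s13 := by positivity
      have t2 : (0:ℤ) ≤ (β : ℤ) * s23 := by positivity
      have t3 : (0:ℤ) ≤ (ε : ℤ) * s5 2 := mul_nonneg (by positivity) (hs5 2).le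
      have hα : (α : ℤ) = 0 := by
        rcases mul_eq_zero.mp (by linarith : (α : ℤ) * s13 = 0) with h | h
        · exact h
        · exact absurd h (by exact_mod_cast h13.ne')
      have hβ : (β : ℤ) = 0 := by
        rcases mul_eq_zero.mp (by linarith : (β : ℤ) * s23 = 0) with h | h
        · exact h
        · exact absurd h (by exact_mod_cast h23.ne')
      have hε : (ε : ℤ) = 0 := by
        rcases mul_eq_zero.mp (by linarith : (ε : ℤ) * s5 2 = 0) with h | h
        · exact h
        · exact absurd h (hs5 2).ne'
      exact ⟨γ, δ, by rw [hrep, hα, hβ, hε]; module⟩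
    | zero => exact ⟨0, 0, by module⟩
    | add a b _ _ iha ihb =>
      obtain ⟨m1', n1', h1⟩ := iha
      obtain ⟨m2', n2', h2⟩ := ihb
      exact ⟨m1' + m2', n1' + n2', by rw [h1, h2]; module⟩
    | neg a _ iha =>
      obtain ⟨m', n', h1⟩ := iha
      exact ⟨-m', -n', by rw [h1]; module⟩
  -- s2, s3 generate inside H₁; s1, s4 inside H₃
  have g2 : s2 ∈ AddSubgroup.closure {y : Fin 4 → ℤ | y ∈ S ∧ y 1 = 0} :=
    AddSubgroup.subset_closure ⟨m2, by simp [hs2]⟩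
  have g3 : s3 ∈ AddSubgroup.closure {y : Fin 4 → ℤ | y ∈ S ∧ y 1 = 0} :=
    AddSubgroup.subset_closure ⟨m3, by simp [hs3]⟩
  have g1 : s1 ∈ AddSubgroup.closure {y : Fin 4 → ℤ | y ∈ S ∧ y 3 = 0} :=
    AddSubgroup.subset_closure ⟨m1, by simp [hs1]⟩
  have g4 : s4 ∈ AddSubgroup.closure {y : Fin 4 → ℤ | y ∈ S ∧ y 3 = 0} :=
    AddSubgroup.subset_closure ⟨m4, by simp [hs4]⟩
  -- membership helpers for the targets
  have inS1 : ∀ (P Q R D E : ℤ), 0 ≤ P → 0 ≤ D → 0 ≤ E →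
      P • s1 + Q • s2 + R • s3 + D • s4 + E • s5 ∈ paperSi S 1 := by
    intro P Q R D E hP hD hE
    refine ⟨P • s1 + D • s4 + E • s5,
      S.add_mem (S.add_mem (smem s1 m1 P hP) (smem s4 m4 D hD)) (smem s5 m5 E hE),
      (-Q) • s2 + (-R) • s3,
      AddSubgroup.add_mem _ (AddSubgroup.zsmul_mem _ g2 _) (AddSubgroup.zsmul_mem _ g3 _),
      by module⟩
  have inS3 : ∀ (P Q R D E : ℤ), 0 ≤ Q → 0 ≤ R → 0 ≤ E →
      P • s1 + Q • s2 + R • s3 + D • s4 + E • s5 ∈ paperSi S 3 := by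
    intro P Q R D E hQ hR hE
    refine ⟨Q • s2 + R • s3 + E • s5,
      S.add_mem (S.add_mem (smem s2 m2 Q hQ) (smem s3 m3 R hR)) (smem s5 m5 E hE),
      (-P) • s1 + (-D) • s4,
      AddSubgroup.add_mem _ (AddSubgroup.zsmul_mem _ g1 _) (AddSubgroup.zsmul_mem _ g4 _),
      by module⟩
  have main : paperSi S 0 ∩ paperSi S 2 ⊆ paperSi S 1 ∪ paperSi S 3 := by
    rintro x ⟨⟨u, huS, t0, ht0, hx0⟩, ⟨v, hvS, t2, ht2, hx2⟩⟩
    obtain ⟨m, n, rfl⟩ := hH0 t0 ht0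
    obtain ⟨p, q, rfl⟩ := hH2 t2 ht2
    obtain ⟨α, β, γ, δ, ε, rfl⟩ := memS u huS
    obtain ⟨A, B, C, D, E, rfl⟩ := memS v hvS
    have hxa : x = ((α : ℤ) - m) • s1 + ((β : ℤ) - n) • s2 + (γ : ℤ) • s3
        + (δ : ℤ) • s4 + (ε : ℤ) • s5 := by rw [hx0]; module
    have hxc : x = (A : ℤ) • s1 + (B : ℤ) • s2 + ((C : ℤ) - p) • s3
        + ((D : ℤ) - q) • s4 + (E : ℤ) • s5 := by rw [hx2]; module
    by_cases ha : 0 ≤ (α : ℤ) - m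
    · left; rw [hxa]
      exact inS1 _ _ _ _ _ ha (by positivity) (by positivity)
    by_cases hb : 0 ≤ (β : ℤ) - n
    · right; rw [hxa]
      exact inS3 _ _ _ _ _ hb (by positivity) (by positivity)
    by_cases hd : 0 ≤ (D : ℤ) - q
    · left; rw [hxc]
      exact inS1 _ _ _ _ _ (by positivity) hd (by positivity)
    by_cases hc : 0 ≤ (C : ℤ) - p
    · right; rw [hxc]
      exact inS3 _ _ _ _ _ (by positivity) hc (by positivity)
    -- impossible case
    exfalso
    push_neg at ha hb hd hc
    have heq := hxa.symm.trans hxc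
    have e0 := congrFun heq 0
    have e2 := congrFun heq 2
    simp [hs1, hs2, hs3, hs4] at e0 e2
    have hs31 : (1:ℤ) ≤ (s31 : ℤ) := by exact_mod_cast h31
    have hs41 : (1:ℤ) ≤ (s41 : ℤ) := by exact_mod_cast h41
    have hs13 : (1:ℤ) ≤ (s13 : ℤ) := by exact_mod_cast h13
    have hs23 : (1:ℤ) ≤ (s23 : ℤ) := by exact_mod_cast h23
    have hu0 : (0:ℤ) < s5 0 := hs5 0
    have hu2 : (0:ℤ) < s5 2 := hs5 2
    have hγ : (0:ℤ) ≤ γ := by positivity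
    have hδ : (0:ℤ) ≤ δ := by positivity
    have hε : (0:ℤ) ≤ ε := by positivity
    have hA : (0:ℤ) ≤ A := by positivity
    have hB : (0:ℤ) ≤ B := by positivity
    have hE : (0:ℤ) ≤ E := by positivity
    -- from coordinate 0: E - ε > 0
    have l1 : (s31:ℤ) ≤ ((γ:ℤ) - ((C:ℤ) - p)) * s31 :=
      le_mul_of_one_le_left (by linarith) (by linarith)
    have l2 : (s41:ℤ) ≤ ((δ:ℤ) - ((D:ℤ) - q)) * s41 :=
      le_mul_of_one_le_left (by linarith) (by linarith)
    have k1 : (0:ℤ) < ((E:ℤ) - ε) * s5 0 := by linarith [e0, l1, l2]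
    have k2 : (0:ℤ) < (E : ℤ) - ε := by
      by_contra h
      push_neg at h
      have := mul_le_mul_of_nonneg_right h hu0.le
      rw [zero_mul] at this
      linarith
    -- from coordinate 2: ε - E > 0
    have l3 : (s13:ℤ) ≤ ((A:ℤ) - ((α:ℤ) - m)) * s13 :=
      le_mul_of_one_le_left (by linarith) (by linarith)
    have l4 : (s23:ℤ) ≤ ((B:ℤ) - ((β:ℤ) - n)) * s23 :=
      le_mul_of_one_le_left (by linarith) (by linarith)
    have k3 : (0:ℤ) < ((ε:ℤ) - E) * s5 2 := by linarith [e2, l3, l4]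
    have k4 : (0:ℤ) < (ε : ℤ) - E := by
      by_contra h
      push_neg at h
      have := mul_le_mul_of_nonneg_right h hu2.le
      rw [zero_mul] at this
      linarith
    linarith
  exact ⟨main, Set.diff_eq_empty.mpr main⟩
end

section
/- Let n1, n1', n2, n2', n3, n4, n5, m1, m2, m3, m3', m4, m4', m5 be natural numbers such that in ℤ^5 one has (n1 − n1')·s1 + (n2 − n2')·s2 + n3·s3 + n4·s4 + n5·s5 = m1·s1 + m2·s2 + (m3 − m3')·s3 + (m4 − m4')·s4 + m5·s5. Assume that s32 and s42 are not both zero, and that s14 and s24 are not both zero. Then the four integers n1 − n1', n2 − n2', m3 − m3', m4 − m4' cannot all be negative. (Claim 1 in the proof of Lemma 3.6, the case m = 5.) -/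
set_option maxHeartbeats 1000000 in
/-- Claim 1 in the proof of Lemma 3.6 (the case `m = 5`).

Generators in `ℤ^5` (Hochster-transformed form):
`s1 = (0, 0, s13, s14, s15)`, `s2 = (s21, 0, 0, s24, s25)`, `s3 = (s31, s32, 0, 0, s35)`,
`s4 = (s41, s42, s43, 0, 0)`, `s5 = (0, s52, s53, s54, 0)`.
If
`(n1 − n1')·s1 + (n2 − n2')·s2 + n3·s3 + n4·s4 + n5·s5
  = m1·s1 + m2·s2 + (m3 − m3')·s3 + (m4 − m4')·s4 + m5·s5`,
`s32, s42` not both zero and `s14, s24` not both zero, then the four integers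
`n1 − n1'`, `n2 − n2'`, `m3 − m3'`, `m4 − m4'` cannot all be negative. -/
theorem stmt3 (s13 s14 s15 s21 s24 s25 s31 s32 s35 s41 s42 s43 s52 s53 s54 : ℕ)
    (s1 s2 s3 s4 s5 : Fin 5 → ℤ)
    (hs1 : s1 = ![0, 0, (s13 : ℤ), (s14 : ℤ), (s15 : ℤ)])
    (hs2 : s2 = ![(s21 : ℤ), 0, 0, (s24 : ℤ), (s25 : ℤ)])
    (hs3 : s3 = ![(s31 : ℤ), (s32 : ℤ), 0, 0, (s35 : ℤ)])
    (hs4 : s4 = ![(s41 : ℤ), (s42 : ℤ), (s43 : ℤ), 0, 0])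
    (hs5 : s5 = ![0, (s52 : ℤ), (s53 : ℤ), (s54 : ℤ), 0])
    (h2 : ¬ (s32 = 0 ∧ s42 = 0)) (h4 : ¬ (s14 = 0 ∧ s24 = 0))
    (n1 n1' n2 n2' n3 n4 n5 m1 m2 m3 m3' m4 m4' m5 : ℕ)
    (heq : ((n1 : ℤ) - (n1' : ℤ)) • s1 + ((n2 : ℤ) - (n2' : ℤ)) • s2 + (n3 : ℤ) • s3
            + (n4 : ℤ) • s4 + (n5 : ℤ) • s5
          = (m1 : ℤ) • s1 + (m2 : ℤ) • s2 + ((m3 : ℤ) - (m3' : ℤ)) • s3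
            + ((m4 : ℤ) - (m4' : ℤ)) • s4 + (m5 : ℤ) • s5) :
    ¬ ((n1 : ℤ) - (n1' : ℤ) < 0 ∧ (n2 : ℤ) - (n2' : ℤ) < 0
        ∧ (m3 : ℤ) - (m3' : ℤ) < 0 ∧ (m4 : ℤ) - (m4' : ℤ) < 0) := by
  rintro ⟨ha, hb, hc, hd⟩
  subst hs1 hs2 hs3 hs4 hs5
  have e3 := congrFun heq 3
  have e1 := congrFun heq 1
  simp [Pi.add_apply, Pi.smul_apply, Matrix.cons_val_one, Matrix.head_cons,
    Matrix.cons_val_zero, smul_eq_mul] at e1 e3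
  have h14 : (0:ℤ) < (s14:ℤ) + (s24:ℤ) := by
    rcases Nat.eq_zero_or_pos s14 with h | h
    · rcases Nat.eq_zero_or_pos s24 with h' | h'
      · exact absurd ⟨h, h'⟩ h4
      · positivity
    · positivity
  have h32 : (0:ℤ) < (s32:ℤ) + (s42:ℤ) := by
    rcases Nat.eq_zero_or_pos s32 with h | h
    · rcases Nat.eq_zero_or_pos s42 with h' | h'
      · exact absurd ⟨h, h'⟩ h2
      · positivity
    · positivity
  have c14 : (0:ℤ) ≤ s14 := Int.natCast_nonneg _
  have c24 : (0:ℤ) ≤ s24 := Int.natCast_nonneg _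
  have c32 : (0:ℤ) ≤ s32 := Int.natCast_nonneg _
  have c42 : (0:ℤ) ≤ s42 := Int.natCast_nonneg _
  have c52 : (0:ℤ) ≤ s52 := Int.natCast_nonneg _
  have c54 : (0:ℤ) ≤ s54 := Int.natCast_nonneg _
  have cn3 : (0:ℤ) ≤ n3 := Int.natCast_nonneg _
  have cn4 : (0:ℤ) ≤ n4 := Int.natCast_nonneg _
  have cm1 : (0:ℤ) ≤ m1 := Int.natCast_nonneg _
  have cm2 : (0:ℤ) ≤ m2 := Int.natCast_nonneg _
  -- From coordinate 3: n5 > m5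
  have h5 : (m5:ℤ) < (n5:ℤ) := by
    by_contra hle
    push_neg at hle
    nlinarith [mul_pos (neg_pos.2 ha) h14,
      mul_nonneg c14 (le_of_lt (neg_pos.2 ha)), mul_nonneg c24 (le_of_lt (neg_pos.2 hb)),
      mul_nonneg c14 cm1, mul_nonneg c24 cm2,
      mul_nonneg c54 (sub_nonneg.2 hle)]
  -- From coordinate 1: contradiction
  nlinarith [mul_nonneg c32 cn3, mul_nonneg c42 cn4,
    mul_nonneg c32 (le_of_lt (neg_pos.2 hc)), mul_nonneg c42 (le_of_lt (neg_pos.2 hd)),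
    mul_pos (neg_pos.2 hc) h32,
    mul_nonneg c52 (sub_nonneg.2 (le_of_lt h5))]
end

section
/- Let n1, n1', n2, n2', n3, n4, n5, m1, m2, m3, m3', m4, m4', m5 be natural numbers such that in ℤ^5 one has (n1 − n1')·s1 + (n2 − n2')·s2 + n3·s3 + n4·s4 + n5·s5 = m1·s1 + m2·s2 + (m3 − m3')·s3 + (m4 − m4')·s4 + m5·s5. Assume that s32 and s42 are not both zero, that s14 and s24 are not both zero, and that s15 and s25 are not both zero. Then it is impossible that simultaneously n1 < n1', n2 < n2', m3 ≥ m3' and m4 < m4'. (Claim 4 in the proof of Lemma 3.6, the case m = 5.) -/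
/-- Claim 4 in the proof of Lemma 3.6 (the case `m = 5`).

With the same generators and the same equation as in Claim 1, and assuming additionally
that `s15, s25` are not both zero, it is impossible that simultaneously
`n1 < n1'`, `n2 < n2'`, `m3 ≥ m3'` and `m4 < m4'`. -/
theorem stmt4 (s13 s14 s15 s21 s24 s25 s31 s32 s35 s41 s42 s43 s52 s53 s54 : ℕ)
    (s1 s2 s3 s4 s5 : Fin 5 → ℤ)
    (hs1 : s1 = ![0, 0, (s13 : ℤ), (s14 : ℤ), (s15 : ℤ)])
    (hs2 : s2 = ![(s21 : ℤ), 0, 0, (s24 : ℤ), (s25 : ℤ)])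
    (hs3 : s3 = ![(s31 : ℤ), (s32 : ℤ), 0, 0, (s35 : ℤ)])
    (hs4 : s4 = ![(s41 : ℤ), (s42 : ℤ), (s43 : ℤ), 0, 0])
    (hs5 : s5 = ![0, (s52 : ℤ), (s53 : ℤ), (s54 : ℤ), 0])
    (h2 : ¬ (s32 = 0 ∧ s42 = 0)) (h4 : ¬ (s14 = 0 ∧ s24 = 0))
    (h5 : ¬ (s15 = 0 ∧ s25 = 0))
    (n1 n1' n2 n2' n3 n4 n5 m1 m2 m3 m3' m4 m4' m5 : ℕ)
    (heq : ((n1 : ℤ) - (n1' : ℤ)) • s1 + ((n2 : ℤ) - (n2' : ℤ)) • s2 + (n3 : ℤ) • s3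
            + (n4 : ℤ) • s4 + (n5 : ℤ) • s5
          = (m1 : ℤ) • s1 + (m2 : ℤ) • s2 + ((m3 : ℤ) - (m3' : ℤ)) • s3
            + ((m4 : ℤ) - (m4' : ℤ)) • s4 + (m5 : ℤ) • s5) :
    ¬ (n1 < n1' ∧ n2 < n2' ∧ m3' ≤ m3 ∧ m4 < m4') := by
  rintro ⟨hn1, hn2, hm3, hm4⟩
  subst hs1 hs2 hs3 hs4 hs5
  have e1 := congrFun heq 1
  have e3 := congrFun heq 3
  have e4 := congrFun heq 4
  simp [Matrix.cons_val_one, Matrix.head_cons, Matrix.cons_val_zero, Fin.isValue,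
    Matrix.cons_val_fin_one] at e1 e3 e4
  have hn1' : (n1 : ℤ) < n1' := by exact_mod_cast hn1
  have hn1' : (n1 : ℤ) < n1' := by exact_mod_cast hn1
  have hn2' : (n2 : ℤ) < n2' := by exact_mod_cast hn2
  have hm3' : (m3' : ℤ) ≤ m3 := by exact_mod_cast hm3
  have hm4' : (m4 : ℤ) < m4' := by exact_mod_cast hm4
  have hm1 : (0:ℤ) ≤ m1 := Int.natCast_nonneg _
  have hm2 : (0:ℤ) ≤ m2 := Int.natCast_nonneg _
  have hn4 : (0:ℤ) ≤ n4 := Int.natCast_nonneg _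
  have hs14 : (0:ℤ) ≤ s14 := Int.natCast_nonneg _
  have hs24 : (0:ℤ) ≤ s24 := Int.natCast_nonneg _
  have hs54 : (0:ℤ) ≤ s54 := Int.natCast_nonneg _
  have hs15 : (0:ℤ) ≤ s15 := Int.natCast_nonneg _
  have hs25 : (0:ℤ) ≤ s25 := Int.natCast_nonneg _
  have hs35 : (0:ℤ) ≤ s35 := Int.natCast_nonneg _
  have hs32 : (0:ℤ) ≤ s32 := Int.natCast_nonneg _
  have hs42 : (0:ℤ) ≤ s42 := Int.natCast_nonneg _
  have hs52 : (0:ℤ) ≤ s52 := Int.natCast_nonneg _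
  -- from e3: n5 > m5
  have hn5 : (m5 : ℤ) < n5 := by
    by_contra h
    push_neg at h
    have t1 : (0:ℤ) ≤ ((m5:ℤ) - n5) * s54 := mul_nonneg (by linarith) hs54
    rcases not_and_or.mp h4 with hs | hs
    · have h1 : (1:ℤ) ≤ s14 := by exact_mod_cast Nat.one_le_iff_ne_zero.mpr hs
      have t2 : (0:ℤ) ≤ ((m1:ℤ) + n1' - n1 - 1) * s14 := mul_nonneg (by linarith) hs14
      have t3 : (0:ℤ) ≤ ((m2:ℤ) + n2' - n2) * s24 := mul_nonneg (by linarith) hs24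
      linarith [e3, t1, t2, t3, h1]
    · have h1 : (1:ℤ) ≤ s24 := by exact_mod_cast Nat.one_le_iff_ne_zero.mpr hs
      have t2 : (0:ℤ) ≤ ((m1:ℤ) + n1' - n1) * s14 := mul_nonneg (by linarith) hs14
      have t3 : (0:ℤ) ≤ ((m2:ℤ) + n2' - n2 - 1) * s24 := mul_nonneg (by linarith) hs24
      linarith [e3, t1, t2, t3, h1]
  -- from e4: n3 > m3 - m3'
  have hn3 : (m3 : ℤ) - m3' < n3 := by
    by_contra h
    push_neg at h
    have t1 : (0:ℤ) ≤ ((m3:ℤ) - m3' - n3) * s35 := mul_nonneg (by linarith) hs35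
    rcases not_and_or.mp h5 with hs | hs
    · have h1 : (1:ℤ) ≤ s15 := by exact_mod_cast Nat.one_le_iff_ne_zero.mpr hs
      have t2 : (0:ℤ) ≤ ((m1:ℤ) + n1' - n1 - 1) * s15 := mul_nonneg (by linarith) hs15
      have t3 : (0:ℤ) ≤ ((m2:ℤ) + n2' - n2) * s25 := mul_nonneg (by linarith) hs25
      linarith [e4, t1, t2, t3, h1]
    · have h1 : (1:ℤ) ≤ s25 := by exact_mod_cast Nat.one_le_iff_ne_zero.mpr hs
      have t2 : (0:ℤ) ≤ ((m1:ℤ) + n1' - n1) * s15 := mul_nonneg (by linarith) hs15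
      have t3 : (0:ℤ) ≤ ((m2:ℤ) + n2' - n2 - 1) * s25 := mul_nonneg (by linarith) hs25
      linarith [e4, t1, t2, t3, h1]
  -- contradiction from e1
  have t4 : (0:ℤ) ≤ ((n5:ℤ) - m5) * s52 := mul_nonneg (by linarith) hs52
  rcases not_and_or.mp h2 with hs | hs
  · have h1 : (1:ℤ) ≤ s32 := by exact_mod_cast Nat.one_le_iff_ne_zero.mpr hs
    have t2 : (0:ℤ) ≤ ((n3:ℤ) - m3 + m3' - 1) * s32 := mul_nonneg (by linarith) hs32
    have t3 : (0:ℤ) ≤ ((n4:ℤ) - m4 + m4') * s42 := mul_nonneg (by linarith) hs42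
    linarith [e1, t2, t3, t4, h1]
  · have h1 : (1:ℤ) ≤ s42 := by exact_mod_cast Nat.one_le_iff_ne_zero.mpr hs
    have t2 : (0:ℤ) ≤ ((n3:ℤ) - m3 + m3') * s32 := mul_nonneg (by linarith) hs32
    have t3 : (0:ℤ) ≤ ((n4:ℤ) - m4 + m4' - 1) * s42 := mul_nonneg (by linarith) hs42
    linarith [e1, t2, t3, t4, h1]
end

section
/- S_1 ∩ S_3 ∩ S_5 ⊆ S_2 ∪ S_4; equivalently, the set G_{{2,4}} = (S_1 ∩ S_3 ∩ S_5) \ (S_2 ∪ S_4) is empty. (The assertion G_{24} = ∅ in Lemma 3.6, the case m = 5.) -/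
lemma memS_rep {s1 s2 s3 s4 s5 x : Fin 5 → ℤ}
    (hx : x ∈ AddSubmonoid.closure {s1, s2, s3, s4, s5}) :
    ∃ n1 n2 n3 n4 n5 : ℕ, x = (n1:ℤ)•s1 + (n2:ℤ)•s2 + (n3:ℤ)•s3 + (n4:ℤ)•s4 + (n5:ℤ)•s5 := by
  induction hx using AddSubmonoid.closure_induction with
  | mem y hy =>
    simp only [Set.mem_insert_iff, Set.mem_singleton_iff] at hy
    rcases hy with h|h|h|h|h <;> subst h
    · exact ⟨1,0,0,0,0, by simp⟩
    · exact ⟨0,1,0,0,0, by simp⟩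
    · exact ⟨0,0,1,0,0, by simp⟩
    · exact ⟨0,0,0,1,0, by simp⟩
    · exact ⟨0,0,0,0,1, by simp⟩
  | zero => exact ⟨0,0,0,0,0, by simp⟩
  | add x y hx hy ihx ihy =>
    obtain ⟨a1,a2,a3,a4,a5,rfl⟩ := ihx
    obtain ⟨b1,b2,b3,b4,b5,rfl⟩ := ihy
    exact ⟨a1+b1,a2+b2,a3+b3,a4+b4,a5+b5, by push_cast; simp [add_smul]; abel⟩

lemma subgroup_rep {S : AddSubmonoid (Fin 5 → ℤ)} {i : Fin 5} {t : Fin 5 → ℤ}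
    (ht : t ∈ AddSubgroup.closure {y : Fin 5 → ℤ | y ∈ S ∧ y i = 0}) :
    ∃ p q : Fin 5 → ℤ, p ∈ S ∧ q ∈ S ∧ p i = 0 ∧ q i = 0 ∧ t = p - q := by
  induction ht using AddSubgroup.closure_induction with
  | mem y hy => exact ⟨y, 0, hy.1, zero_mem S, hy.2, rfl, by simp⟩
  | zero => exact ⟨0, 0, zero_mem S, zero_mem S, rfl, rfl, by simp⟩
  | add x y hx hy ihx ihy =>
    obtain ⟨p1,q1,hp1,hq1,hp1i,hq1i,rfl⟩ := ihx
    obtain ⟨p2,q2,hp2,hq2,hp2i,hq2i,rfl⟩ := ihy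
    exact ⟨p1+p2, q1+q2, add_mem hp1 hp2, add_mem hq1 hq2,
      by simp [hp1i, hp2i], by simp [hq1i, hq2i], by abel⟩
  | neg x hx ihx =>
    obtain ⟨p,q,hp,hq,hpi,hqi,rfl⟩ := ihx
    exact ⟨q, p, hq, hp, hqi, hpi, by abel⟩

lemma force3 {u v w : ℕ} {P Q R : ℕ} (hP : 0 < P) (hQ : 0 < Q) (hR : 0 < R)
    (h : (u:ℤ) * P + (v:ℤ) * Q + (w:ℤ) * R = 0) : (u:ℤ) = 0 ∧ (v:ℤ) = 0 ∧ (w:ℤ) = 0 := by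
  have h' : u * P + v * Q + w * R = 0 := by exact_mod_cast h
  simp only [Nat.add_eq_zero, Nat.mul_eq_zero] at h'
  obtain ⟨⟨h1, h2⟩, h3⟩ := h'
  have hu : u = 0 := by omega
  have hv : v = 0 := by omega
  have hw : w = 0 := by omega
  simp [hu, hv, hw]

section main
variable (s13 s14 s15 s21 s24 s25 s31 s32 s35 s41 s42 s43 s52 s53 s54 : ℕ)
variable {s1 s2 s3 s4 s5 : Fin 5 → ℤ}
variable {S : AddSubmonoid (Fin 5 → ℤ)}

/-- Representation lemma for members of `paperSi S 0`. -/
lemma rep0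
    (hpos : 0 < s13 ∧ 0 < s14 ∧ 0 < s15 ∧ 0 < s21 ∧ 0 < s24 ∧ 0 < s25 ∧ 0 < s31 ∧ 0 < s32
      ∧ 0 < s35 ∧ 0 < s41 ∧ 0 < s42 ∧ 0 < s43 ∧ 0 < s52 ∧ 0 < s53 ∧ 0 < s54)
    (hs1 : s1 = ![0, 0, (s13 : ℤ), (s14 : ℤ), (s15 : ℤ)])
    (hs2 : s2 = ![(s21 : ℤ), 0, 0, (s24 : ℤ), (s25 : ℤ)])
    (hs3 : s3 = ![(s31 : ℤ), (s32 : ℤ), 0, 0, (s35 : ℤ)])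
    (hs4 : s4 = ![(s41 : ℤ), (s42 : ℤ), (s43 : ℤ), 0, 0])
    (hs5 : s5 = ![0, (s52 : ℤ), (s53 : ℤ), (s54 : ℤ), 0])
    (hS : S = AddSubmonoid.closure {s1, s2, s3, s4, s5})
    {x : Fin 5 → ℤ} (hx : x ∈ paperSi S 0) :
    ∃ a1 a2 a3 a4 a5 : ℤ, 0 ≤ a2 ∧ 0 ≤ a3 ∧ 0 ≤ a4 ∧
      x = a1•s1 + a2•s2 + a3•s3 + a4•s4 + a5•s5 := by
  obtain ⟨s, hsS, t, htc, rfl⟩ := hx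
  rw [hS] at hsS htc
  obtain ⟨p, q, hp, hq, hpi, hqi, rfl⟩ := subgroup_rep htc
  obtain ⟨m1,m2,m3,m4,m5,rfl⟩ := memS_rep hsS
  obtain ⟨u1,u2,u3,u4,u5,hpe⟩ := memS_rep hp
  obtain ⟨v1,v2,v3,v4,v5,hqe⟩ := memS_rep hq
  rw [hpe] at hpi
  rw [hqe] at hqi
  simp [hs1, hs2, hs3, hs4, hs5] at hpi hqi
  obtain ⟨h13,h14,h15,h21,h24,h25,h31,h32,h35,h41,h42,h43,h52,h53,h54⟩ := hpos
  obtain ⟨hu2, hu3, hu4⟩ := force3 h21 h31 h41 hpi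
  obtain ⟨hv2, hv3, hv4⟩ := force3 h21 h31 h41 hqi
  refine ⟨(m1:ℤ) - u1 + v1, (m2:ℤ) - u2 + v2, (m3:ℤ) - u3 + v3, (m4:ℤ) - u4 + v4,
    (m5:ℤ) - u5 + v5, by omega, by omega, by omega, ?_⟩
  rw [hpe, hqe]; simp only [sub_smul, add_smul]; abel

/-- Representation lemma for members of `paperSi S 2`. -/
lemma rep2
    (hpos : 0 < s13 ∧ 0 < s14 ∧ 0 < s15 ∧ 0 < s21 ∧ 0 < s24 ∧ 0 < s25 ∧ 0 < s31 ∧ 0 < s32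
      ∧ 0 < s35 ∧ 0 < s41 ∧ 0 < s42 ∧ 0 < s43 ∧ 0 < s52 ∧ 0 < s53 ∧ 0 < s54)
    (hs1 : s1 = ![0, 0, (s13 : ℤ), (s14 : ℤ), (s15 : ℤ)])
    (hs2 : s2 = ![(s21 : ℤ), 0, 0, (s24 : ℤ), (s25 : ℤ)])
    (hs3 : s3 = ![(s31 : ℤ), (s32 : ℤ), 0, 0, (s35 : ℤ)])
    (hs4 : s4 = ![(s41 : ℤ), (s42 : ℤ), (s43 : ℤ), 0, 0])
    (hs5 : s5 = ![0, (s52 : ℤ), (s53 : ℤ), (s54 : ℤ), 0])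
    (hS : S = AddSubmonoid.closure {s1, s2, s3, s4, s5})
    {x : Fin 5 → ℤ} (hx : x ∈ paperSi S 2) :
    ∃ b1 b2 b3 b4 b5 : ℤ, 0 ≤ b1 ∧ 0 ≤ b4 ∧ 0 ≤ b5 ∧
      x = b1•s1 + b2•s2 + b3•s3 + b4•s4 + b5•s5 := by
  obtain ⟨s, hsS, t, htc, rfl⟩ := hx
  rw [hS] at hsS htc
  obtain ⟨p, q, hp, hq, hpi, hqi, rfl⟩ := subgroup_rep htc
  obtain ⟨m1,m2,m3,m4,m5,rfl⟩ := memS_rep hsS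
  obtain ⟨u1,u2,u3,u4,u5,hpe⟩ := memS_rep hp
  obtain ⟨v1,v2,v3,v4,v5,hqe⟩ := memS_rep hq
  rw [hpe] at hpi
  rw [hqe] at hqi
  simp [hs1, hs2, hs3, hs4, hs5] at hpi hqi
  obtain ⟨h13,h14,h15,h21,h24,h25,h31,h32,h35,h41,h42,h43,h52,h53,h54⟩ := hpos
  obtain ⟨hu1, hu4, hu5⟩ := force3 h13 h43 h53 hpi
  obtain ⟨hv1, hv4, hv5⟩ := force3 h13 h43 h53 hqi
  refine ⟨(m1:ℤ) - u1 + v1, (m2:ℤ) - u2 + v2, (m3:ℤ) - u3 + v3, (m4:ℤ) - u4 + v4,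
    (m5:ℤ) - u5 + v5, by omega, by omega, by omega, ?_⟩
  rw [hpe, hqe]; simp only [sub_smul, add_smul]; abel

/-- Output lemma: a representation with nonnegative coefficients on `s3, s4, s5`
puts `x` into `paperSi S 1`. -/
lemma out1
    (hs1 : s1 = ![0, 0, (s13 : ℤ), (s14 : ℤ), (s15 : ℤ)])
    (hs2 : s2 = ![(s21 : ℤ), 0, 0, (s24 : ℤ), (s25 : ℤ)])
    (hS : S = AddSubmonoid.closure {s1, s2, s3, s4, s5})
    {x : Fin 5 → ℤ} {e1 e2 e3 e4 e5 : ℤ} (h3 : 0 ≤ e3) (h4 : 0 ≤ e4) (h5 : 0 ≤ e5)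
    (hx : x = e1•s1 + e2•s2 + e3•s3 + e4•s4 + e5•s5) :
    x ∈ paperSi S 1 := by
  obtain ⟨n1, m1, hn1⟩ : ∃ n m : ℕ, e1 = (n:ℤ) - m := ⟨e1.toNat, (-e1).toNat, by omega⟩
  obtain ⟨n2, m2, hn2⟩ : ∃ n m : ℕ, e2 = (n:ℤ) - m := ⟨e2.toNat, (-e2).toNat, by omega⟩
  obtain ⟨n3, hn3⟩ : ∃ n : ℕ, e3 = (n:ℤ) := ⟨e3.toNat, by omega⟩
  obtain ⟨n4, hn4⟩ : ∃ n : ℕ, e4 = (n:ℤ) := ⟨e4.toNat, by omega⟩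
  obtain ⟨n5, hn5⟩ : ∃ n : ℕ, e5 = (n:ℤ) := ⟨e5.toNat, by omega⟩
  subst hn1 hn2 hn3 hn4 hn5
  have hmem : ∀ y ∈ ({s1, s2, s3, s4, s5} : Set (Fin 5 → ℤ)), ∀ n : ℕ, (n:ℤ) • y ∈ S := by
    intro y hy n
    rw [natCast_zsmul, hS]
    exact nsmul_mem (AddSubmonoid.subset_closure hy) n
  refine ⟨(n1:ℤ)•s1 + (n2:ℤ)•s2 + (n3:ℤ)•s3 + (n4:ℤ)•s4 + (n5:ℤ)•s5,
    ?_, (m1:ℤ)•s1 + (m2:ℤ)•s2, ?_, ?_⟩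
  · exact add_mem (add_mem (add_mem (add_mem
      (hmem s1 (by simp) n1) (hmem s2 (by simp) n2)) (hmem s3 (by simp) n3))
      (hmem s4 (by simp) n4)) (hmem s5 (by simp) n5)
  · have hs1m : s1 ∈ {y : Fin 5 → ℤ | y ∈ S ∧ y 1 = 0} :=
      ⟨by rw [hS]; exact AddSubmonoid.subset_closure (by simp), by simp [hs1]⟩
    have hs2m : s2 ∈ {y : Fin 5 → ℤ | y ∈ S ∧ y 1 = 0} :=
      ⟨by rw [hS]; exact AddSubmonoid.subset_closure (by simp), by simp [hs2]⟩
    exact add_mem (zsmul_mem (AddSubgroup.subset_closure hs1m) _)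
      (zsmul_mem (AddSubgroup.subset_closure hs2m) _)
  · rw [hx]; simp only [sub_smul]; abel

/-- Output lemma: a representation with nonnegative coefficients on `s1, s2, s5`
puts `x` into `paperSi S 3`. -/
lemma out3
    (hs3 : s3 = ![(s31 : ℤ), (s32 : ℤ), 0, 0, (s35 : ℤ)])
    (hs4 : s4 = ![(s41 : ℤ), (s42 : ℤ), (s43 : ℤ), 0, 0])
    (hS : S = AddSubmonoid.closure {s1, s2, s3, s4, s5})
    {x : Fin 5 → ℤ} {e1 e2 e3 e4 e5 : ℤ} (h1 : 0 ≤ e1) (h2 : 0 ≤ e2) (h5 : 0 ≤ e5)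
    (hx : x = e1•s1 + e2•s2 + e3•s3 + e4•s4 + e5•s5) :
    x ∈ paperSi S 3 := by
  obtain ⟨n3, m3, hn3⟩ : ∃ n m : ℕ, e3 = (n:ℤ) - m := ⟨e3.toNat, (-e3).toNat, by omega⟩
  obtain ⟨n4, m4, hn4⟩ : ∃ n m : ℕ, e4 = (n:ℤ) - m := ⟨e4.toNat, (-e4).toNat, by omega⟩
  obtain ⟨n1, hn1⟩ : ∃ n : ℕ, e1 = (n:ℤ) := ⟨e1.toNat, by omega⟩
  obtain ⟨n2, hn2⟩ : ∃ n : ℕ, e2 = (n:ℤ) := ⟨e2.toNat, by omega⟩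
  obtain ⟨n5, hn5⟩ : ∃ n : ℕ, e5 = (n:ℤ) := ⟨e5.toNat, by omega⟩
  subst hn1 hn2 hn3 hn4 hn5
  have hmem : ∀ y ∈ ({s1, s2, s3, s4, s5} : Set (Fin 5 → ℤ)), ∀ n : ℕ, (n:ℤ) • y ∈ S := by
    intro y hy n
    rw [natCast_zsmul, hS]
    exact nsmul_mem (AddSubmonoid.subset_closure hy) n
  refine ⟨(n1:ℤ)•s1 + (n2:ℤ)•s2 + (n3:ℤ)•s3 + (n4:ℤ)•s4 + (n5:ℤ)•s5,
    ?_, (m3:ℤ)•s3 + (m4:ℤ)•s4, ?_, ?_⟩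
  · exact add_mem (add_mem (add_mem (add_mem
      (hmem s1 (by simp) n1) (hmem s2 (by simp) n2)) (hmem s3 (by simp) n3))
      (hmem s4 (by simp) n4)) (hmem s5 (by simp) n5)
  · have hs3m : s3 ∈ {y : Fin 5 → ℤ | y ∈ S ∧ y 3 = 0} :=
      ⟨by rw [hS]; exact AddSubmonoid.subset_closure (by simp), by simp [hs3]⟩
    have hs4m : s4 ∈ {y : Fin 5 → ℤ | y ∈ S ∧ y 3 = 0} :=
      ⟨by rw [hS]; exact AddSubmonoid.subset_closure (by simp), by simp [hs4]⟩
    exact add_mem (zsmul_mem (AddSubgroup.subset_closure hs3m) _)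
      (zsmul_mem (AddSubgroup.subset_closure hs4m) _)
  · rw [hx]; simp only [sub_smul]; abel

end main

/-- The assertion `G_{24} = ∅` in Lemma 3.6 (the case `m = 5`): with the
Hochster-transformed generators
`s1 = (0, 0, s13, s14, s15)`, `s2 = (s21, 0, 0, s24, s25)`, `s3 = (s31, s32, 0, 0, s35)`,
`s4 = (s41, s42, s43, 0, 0)`, `s5 = (0, s52, s53, s54, 0)` (all the listed entries positive),
one has `S_1 ∩ S_3 ∩ S_5 ⊆ S_2 ∪ S_4`, i.e.
`G_{{2,4}} = (S_1 ∩ S_3 ∩ S_5) \ (S_2 ∪ S_4) = ∅`.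
(Coordinates `1,…,5` of the paper correspond to the indices `0,…,4` of `Fin 5`.) -/
theorem stmt6 (s13 s14 s15 s21 s24 s25 s31 s32 s35 s41 s42 s43 s52 s53 s54 : ℕ)
    (hpos : 0 < s13 ∧ 0 < s14 ∧ 0 < s15 ∧ 0 < s21 ∧ 0 < s24 ∧ 0 < s25 ∧ 0 < s31 ∧ 0 < s32
      ∧ 0 < s35 ∧ 0 < s41 ∧ 0 < s42 ∧ 0 < s43 ∧ 0 < s52 ∧ 0 < s53 ∧ 0 < s54)
    (s1 s2 s3 s4 s5 : Fin 5 → ℤ)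
    (hs1 : s1 = ![0, 0, (s13 : ℤ), (s14 : ℤ), (s15 : ℤ)])
    (hs2 : s2 = ![(s21 : ℤ), 0, 0, (s24 : ℤ), (s25 : ℤ)])
    (hs3 : s3 = ![(s31 : ℤ), (s32 : ℤ), 0, 0, (s35 : ℤ)])
    (hs4 : s4 = ![(s41 : ℤ), (s42 : ℤ), (s43 : ℤ), 0, 0])
    (hs5 : s5 = ![0, (s52 : ℤ), (s53 : ℤ), (s54 : ℤ), 0])
    (S : AddSubmonoid (Fin 5 → ℤ))
    (hS : S = AddSubmonoid.closure {s1, s2, s3, s4, s5}) :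
    (paperSi S 0 ∩ paperSi S 2 ∩ paperSi S 4 ⊆ paperSi S 1 ∪ paperSi S 3) ∧
      (paperSi S 0 ∩ paperSi S 2 ∩ paperSi S 4) \ (paperSi S 1 ∪ paperSi S 3) = ∅ := by
  have key : paperSi S 0 ∩ paperSi S 2 ∩ paperSi S 4 ⊆ paperSi S 1 ∪ paperSi S 3 := by
    intro x hx
    obtain ⟨⟨hx0, hx2⟩, -⟩ := hx
    obtain ⟨a1, a2, a3, a4, a5, ha2, ha3, ha4, ha⟩ :=
      rep0 s13 s14 s15 s21 s24 s25 s31 s32 s35 s41 s42 s43 s52 s53 s54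
        hpos hs1 hs2 hs3 hs4 hs5 hS hx0
    obtain ⟨b1, b2, b3, b4, b5, hb1, hb4, hb5, hb⟩ :=
      rep2 s13 s14 s15 s21 s24 s25 s31 s32 s35 s41 s42 s43 s52 s53 s54
        hpos hs1 hs2 hs3 hs4 hs5 hS hx2
    obtain ⟨h13,h14,h15,h21,h24,h25,h31,h32,h35,h41,h42,h43,h52,h53,h54⟩ := hpos
    -- positivity of the casts
    have P21 : (0:ℤ) < s21 := by exact_mod_cast h21
    have P31 : (0:ℤ) < s31 := by exact_mod_cast h31
    have P41 : (0:ℤ) < s41 := by exact_mod_cast h41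
    have P13 : (0:ℤ) < s13 := by exact_mod_cast h13
    have P43 : (0:ℤ) < s43 := by exact_mod_cast h43
    have P53 : (0:ℤ) < s53 := by exact_mod_cast h53
    have P15 : (0:ℤ) < s15 := by exact_mod_cast h15
    have P25 : (0:ℤ) < s25 := by exact_mod_cast h25
    have P35 : (0:ℤ) < s35 := by exact_mod_cast h35
    rcases le_or_gt 0 a5 with ha5 | ha5
    · exact Or.inl (out1 s13 s14 s15 s21 s24 s25 hs1 hs2 hS ha3 ha4 ha5 ha)
    rcases le_or_gt 0 b2 with hb2 | hb2
    · exact Or.inr (out3 s31 s32 s35 s41 s42 s43 hs3 hs4 hS hb1 hb2 hb5 hb)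
    -- now a5 < 0 and b2 < 0; we show 0 ≤ b3 and conclude via the b-representation
    -- coordinate equations
    have hco : ∀ k : Fin 5, (a1•s1 + a2•s2 + a3•s3 + a4•s4 + a5•s5) k
        = (b1•s1 + b2•s2 + b3•s3 + b4•s4 + b5•s5) k := by
      intro k; rw [← ha, ← hb]
    have h0 := hco 0
    have h2 := hco 2
    have h4 := hco 4
    simp [hs1, hs2, hs3, hs4, hs5] at h0 h2 h4
    have hb3 : 0 ≤ b3 := by
      by_contra hb3
      push_neg at hb3
      rcases le_or_gt a4 b4 with h44 | h44
      · -- coordinate 4 gives a1 < b1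
        have f1 : a2 * (s25:ℤ) - b2 * (s25:ℤ) > 0 := by
          have := mul_pos (show (0:ℤ) < a2 - b2 by linarith) P25
          rw [sub_mul] at this; linarith
        have f2 : a3 * (s35:ℤ) - b3 * (s35:ℤ) > 0 := by
          have := mul_pos (show (0:ℤ) < a3 - b3 by linarith) P35
          rw [sub_mul] at this; linarith
        have k1 : a1 * (s15:ℤ) < b1 * (s15:ℤ) := by linarith
        have k2 : a1 < b1 := by
          by_contra hc
          push_neg at hc
          have := mul_le_mul_of_nonneg_right hc (le_of_lt P15)
          linarith
        -- coordinate 2 now gives a contradiction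
        have g1 : a1 * (s13:ℤ) < b1 * (s13:ℤ) := mul_lt_mul_of_pos_right k2 P13
        have g2 : a4 * (s43:ℤ) ≤ b4 * (s43:ℤ) :=
          mul_le_mul_of_nonneg_right h44 (le_of_lt P43)
        have g3 : a5 * (s53:ℤ) < b5 * (s53:ℤ) :=
          mul_lt_mul_of_pos_right (by linarith) P53
        linarith
      · -- coordinate 0 gives a contradiction
        have g1 : b2 * (s21:ℤ) < a2 * (s21:ℤ) := mul_lt_mul_of_pos_right (by linarith) P21
        have g2 : b3 * (s31:ℤ) < a3 * (s31:ℤ) := mul_lt_mul_of_pos_right (by linarith) P31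
        have g3 : b4 * (s41:ℤ) < a4 * (s41:ℤ) := mul_lt_mul_of_pos_right h44 P41
        linarith
    exact Or.inl (out1 s13 s14 s15 s21 s24 s25 hs1 hs2 hS hb3 hb4 hb5 hb)
  exact ⟨key, Set.diff_eq_empty.mpr key⟩
end

section
/- Let S be a finitely generated submonoid of ℕ^n and let G ⊆ ℤ^n be the subgroup generated by S. Then there exist a natural number m and a ℤ-linear map L : ℤ^n → ℤ^m such that: (1) L is injective on G, so that L restricts to an additive monoid isomorphism from S onto L(S); (2) L(S) ⊆ ℕ^m; and (3) for every x ∈ G, L(x) ∈ ℕ^m if and only if k·x ∈ S for some integer k ≥ 1 (that is, L(G) ∩ ℕ^m equals the saturation of L(S) in L(G), so that L(S) becomes a standard affine semigroup). (The Hochster transform lemma of Section 2.) -/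
private lemma foldr_max_ge (l : List ℚ) (b : ℚ) :
    b ≤ l.foldr max b ∧ ∀ x ∈ l, x ≤ l.foldr max b := by
  induction l with
  | nil => simp
  | cons a t ih =>
    refine ⟨le_trans ih.1 (le_max_right _ _), ?_⟩
    intro x hx
    rcases List.mem_cons.mp hx with h | h
    · subst h; exact le_max_left _ _
    · exact le_trans (ih.2 x h) (le_max_right _ _)

private lemma foldr_max_mem (l : List ℚ) (b : ℚ) :
    l.foldr max b = b ∨ l.foldr max b ∈ l := by
  induction l with
  | nil => simp
  | cons a t ih =>
    rcases max_choice a (t.foldr max b) with h | h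
    · right; rw [List.foldr_cons, h]; exact List.mem_cons_self
    · rcases ih with h' | h'
      · left; rw [List.foldr_cons, h, h']
      · right; rw [List.foldr_cons, h]; exact List.mem_cons_of_mem _ h'

private lemma foldr_min_le (l : List ℚ) (b : ℚ) :
    l.foldr min b ≤ b ∧ ∀ x ∈ l, l.foldr min b ≤ x := by
  induction l with
  | nil => simp
  | cons a t ih =>
    refine ⟨le_trans (min_le_right _ _) ih.1, ?_⟩
    intro x hx
    rcases List.mem_cons.mp hx with h | h
    · subst h; exact min_le_left _ _
    · exact le_trans (min_le_right _ _) (ih.2 x h)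

section FM
variable {M : Type} [AddCommGroup M] [Module ℚ M]

private noncomputable def inrF (φ : (ℚ × M) →ₗ[ℚ] ℚ) : M →ₗ[ℚ] ℚ :=
  φ.comp (LinearMap.inr ℚ ℚ M)

private lemma phi_eval (φ : (ℚ × M) →ₗ[ℚ] ℚ) (t : ℚ) (w : M) :
    φ (t, w) = t * φ (1, 0) + inrF φ w := by
  have h : (t, w) = t • ((1 : ℚ), (0 : M)) + ((0 : ℚ), w) := by
    simp [Prod.ext_iff]
  rw [h, map_add, map_smul, smul_eq_mul, inrF, LinearMap.comp_apply, LinearMap.inr_apply]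

private lemma fm_step (Φ : List ((ℚ × M) →ₗ[ℚ] ℚ)) :
    ∃ Ψ : List (M →ₗ[ℚ] ℚ), ∀ w : M,
      (∃ t : ℚ, ∀ φ ∈ Φ, 0 ≤ φ (t, w)) ↔ (∀ ψ ∈ Ψ, 0 ≤ ψ w) := by
  classical
  refine ⟨(Φ.filter (fun φ => φ (1, 0) = 0)).map inrF
      ++ (Φ.filter (fun φ => 0 < φ (1, 0))).flatMap (fun p =>
           (Φ.filter (fun φ => φ (1, 0) < 0)).map
             (fun q => p (1, 0) • inrF q + (-q (1, 0)) • inrF p)), fun w => ?_⟩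
  constructor
  · rintro ⟨t, ht⟩ ψ hψ
    rcases List.mem_append.mp hψ with h | h
    · obtain ⟨φ, hφ, rfl⟩ := List.mem_map.mp h
      rw [List.mem_filter] at hφ
      have h0 : φ (1, 0) = 0 := by simpa using hφ.2
      have := ht φ hφ.1
      rw [phi_eval, h0] at this
      linarith
    · obtain ⟨p, hp, h2⟩ := List.mem_flatMap.mp h
      obtain ⟨q, hq, rfl⟩ := List.mem_map.mp h2
      rw [List.mem_filter] at hp hq
      have hpa : 0 < p (1, 0) := by simpa using hp.2
      have hqa : q (1, 0) < 0 := by simpa using hq.2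
      have h1 := ht p hp.1
      have h2 := ht q hq.1
      rw [phi_eval] at h1 h2
      simp only [LinearMap.add_apply, LinearMap.smul_apply, smul_eq_mul]
      nlinarith
  · intro h
    set lowers := (Φ.filter (fun φ => 0 < φ (1, 0))).map (fun φ => -inrF φ w / φ (1, 0))
      with hlowers
    set t₀ := ((Φ.filter (fun φ => φ (1, 0) < 0)).map
        (fun φ => inrF φ w / (-φ (1, 0)))).foldr min 0 with ht₀
    set t := lowers.foldr max t₀ with htdef
    have hlow : ∀ φ ∈ Φ, 0 < φ (1, 0) → -inrF φ w / φ (1, 0) ≤ t := by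
      intro φ hφ hpos
      exact (foldr_max_ge lowers t₀).2 _
        (List.mem_map.mpr ⟨φ, List.mem_filter.mpr ⟨hφ, by simpa using hpos⟩, rfl⟩)
    have hup : ∀ φ ∈ Φ, φ (1, 0) < 0 → t ≤ inrF φ w / (-φ (1, 0)) := by
      intro q hq hneg
      have hmemu : inrF q w / (-q (1, 0)) ∈ (Φ.filter (fun φ => φ (1, 0) < 0)).map
          (fun φ => inrF φ w / (-φ (1, 0))) :=
        List.mem_map.mpr ⟨q, List.mem_filter.mpr ⟨hq, by simpa using hneg⟩, rfl⟩
      rcases foldr_max_mem lowers t₀ with h' | h'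
      · rw [htdef, h']
        exact (foldr_min_le _ 0).2 _ hmemu
      · obtain ⟨p, hp, hval⟩ := List.mem_map.mp h'
        rw [List.mem_filter] at hp
        have hpa : 0 < p (1, 0) := by simpa using hp.2
        have hpair := h (p (1, 0) • inrF q + (-q (1, 0)) • inrF p)
          (List.mem_append.mpr (Or.inr (List.mem_flatMap.mpr
            ⟨p, List.mem_filter.mpr ⟨hp.1, by simpa using hpa⟩,
             List.mem_map.mpr ⟨q, List.mem_filter.mpr ⟨hq, by simpa using hneg⟩, rfl⟩⟩)))
        simp only [LinearMap.add_apply, LinearMap.smul_apply, smul_eq_mul] at hpair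
        rw [htdef, ← hval]
        rw [div_le_div_iff₀ hpa (by linarith)]
        nlinarith
    refine ⟨t, fun φ hφ => ?_⟩
    rw [phi_eval]
    rcases lt_trichotomy (φ (1, 0)) 0 with hc | hc | hc
    · have := hup φ hφ hc
      rw [le_div_iff₀ (by linarith)] at this
      nlinarith
    · have := h (inrF φ) (List.mem_append.mpr (Or.inl
        (List.mem_map.mpr ⟨φ, List.mem_filter.mpr ⟨hφ, by simpa using hc⟩, rfl⟩)))
      rw [hc]; linarith
    · have := hlow φ hφ hc
      rw [div_le_iff₀ hc] at this
      nlinarith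

private def consMap (r : ℕ) (M : Type) [AddCommGroup M] [Module ℚ M] :
    (ℚ × ((Fin r → ℚ) × M)) →ₗ[ℚ] ((Fin (r + 1) → ℚ) × M) where
  toFun p := (Fin.cons p.1 p.2.1, p.2.2)
  map_add' p q := by
    refine Prod.ext ?_ rfl
    funext i
    refine Fin.cases ?_ (fun j => ?_) i <;> simp
  map_smul' c p := by
    refine Prod.ext ?_ rfl
    funext i
    refine Fin.cases ?_ (fun j => ?_) i <;> simp

private lemma fm_multi (r : ℕ) (Φ : List (((Fin r → ℚ) × M) →ₗ[ℚ] ℚ)) :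
    ∃ Ψ : List (M →ₗ[ℚ] ℚ), ∀ w : M,
      (∃ lam : Fin r → ℚ, ∀ φ ∈ Φ, 0 ≤ φ (lam, w)) ↔ (∀ ψ ∈ Ψ, 0 ≤ ψ w) := by
  induction r with
  | zero =>
    refine ⟨Φ.map (fun φ => φ.comp ((0 : M →ₗ[ℚ] (Fin 0 → ℚ)).prod LinearMap.id)), fun w => ?_⟩
    constructor
    · rintro ⟨lam, hlam⟩ ψ hψ
      obtain ⟨φ, hφ, rfl⟩ := List.mem_map.mp hψ
      have : ((0 : M →ₗ[ℚ] (Fin 0 → ℚ)).prod LinearMap.id) w = (lam, w) := by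
        refine Prod.ext ?_ rfl
        exact Subsingleton.elim _ _
      rw [LinearMap.comp_apply, this]
      exact hlam φ hφ
    · intro h
      refine ⟨0, fun φ hφ => ?_⟩
      have := h _ (List.mem_map_of_mem hφ)
      rw [LinearMap.comp_apply] at this
      simpa [LinearMap.prod_apply] using this
  | succ r ih =>
    obtain ⟨Ψ₁, h₁⟩ := fm_step (Φ.map (fun φ => φ.comp (consMap r M)))
    obtain ⟨Ψ, h₂⟩ := ih Ψ₁
    refine ⟨Ψ, fun w => ?_⟩
    rw [← h₂]
    constructor
    · rintro ⟨lam, hlam⟩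
      refine ⟨Fin.tail lam, (h₁ _).mp ⟨lam 0, ?_⟩⟩
      intro φ' hφ'
      obtain ⟨φ, hφ, rfl⟩ := List.mem_map.mp hφ'
      rw [LinearMap.comp_apply]
      have : consMap r M (lam 0, (Fin.tail lam, w)) = (lam, w) := by
        refine Prod.ext ?_ rfl
        exact Fin.cons_self_tail lam
      rw [this]
      exact hlam φ hφ
    · rintro ⟨mu, hmu⟩
      obtain ⟨t, ht⟩ := (h₁ (mu, w)).mpr hmu
      refine ⟨Fin.cons t mu, fun φ hφ => ?_⟩
      have := ht _ (List.mem_map_of_mem hφ)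
      rw [LinearMap.comp_apply] at this
      simpa [consMap] using this

end FM

private lemma num_eq (c : ℚ) : (c.num : ℚ) = c * c.den := by
  have h := Rat.num_div_den c
  rw [div_eq_iff (by exact_mod_cast c.den_ne_zero)] at h
  exact h

private lemma clear_den_vec {r : ℕ} (lam : Fin r → ℚ) :
    ∃ (K : ℕ) (e : Fin r → ℤ), 0 < K ∧ ∀ i, (e i : ℚ) = (K : ℚ) * lam i := by
  classical
  refine ⟨∏ i, (lam i).den, fun i => ((∏ j, (lam j).den) / (lam i).den : ℕ) * (lam i).num,
    Finset.prod_pos (fun i _ => (lam i).pos), fun i => ?_⟩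
  have hdvd : (lam i).den ∣ ∏ j, (lam j).den := Finset.dvd_prod_of_mem _ (Finset.mem_univ i)
  have hcancel : ((((∏ j, (lam j).den) / (lam i).den : ℕ)) : ℚ) * ((lam i).den : ℚ)
      = ((∏ j, (lam j).den : ℕ) : ℚ) := by
    rw [← Nat.cast_mul, Nat.div_mul_cancel hdvd]
  rw [Int.cast_mul, Int.cast_natCast, num_eq]
  push_cast at hcancel ⊢
  linear_combination lam i * hcancel

private lemma clear_den_lin {n : ℕ} (ψ : (Fin n → ℚ) →ₗ[ℚ] ℚ) :
    ∃ (N : ℕ) (d : Fin n → ℤ), 0 < N ∧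
      ∀ v : Fin n → ℤ, ((∑ i, d i * v i : ℤ) : ℚ) = (N : ℚ) * ψ (fun j => (v j : ℚ)) := by
  classical
  obtain ⟨N, d, hN, hd⟩ := clear_den_vec (fun j => ψ (fun k => if j = k then 1 else 0))
  refine ⟨N, d, hN, fun v => ?_⟩
  rw [LinearMap.pi_apply_eq_sum_univ ψ (fun j => (v j : ℚ)), Finset.mul_sum]
  push_cast
  refine Finset.sum_congr rfl (fun i _ => ?_)
  rw [hd i, smul_eq_mul]
  ring

/-- The Hochster transform lemma of Section 2. Let `S` be a finitely generated
submonoid of `ℕ^n` (realized as a finitely generated additive submonoid of `ℤ^n`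
all of whose elements have nonnegative coordinates) and let `G ⊆ ℤ^n` be the
subgroup generated by `S`. Then there are `m : ℕ` and a `ℤ`-linear map
`L : ℤ^n → ℤ^m` such that: (1) `L` is injective on `G` (hence restricts to an
additive monoid isomorphism of `S` onto `L(S)`); (2) `L(S) ⊆ ℕ^m`; and
(3) for every `x ∈ G`, `L(x) ∈ ℕ^m` iff `k·x ∈ S` for some integer `k ≥ 1`
(so `L(G) ∩ ℕ^m` is the saturation of `L(S)` in `L(G)`, i.e. `L(S)` is a
standard affine semigroup). -/
theorem stmt8 (n : ℕ) (S : AddSubmonoid (Fin n → ℤ))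
    (hSnonneg : ∀ x ∈ S, ∀ i, 0 ≤ x i) (hSfg : S.FG)
    (G : AddSubgroup (Fin n → ℤ)) (hG : G = AddSubgroup.closure (S : Set (Fin n → ℤ))) :
    ∃ (m : ℕ) (L : (Fin n → ℤ) →ₗ[ℤ] (Fin m → ℤ)),
      (∀ x ∈ G, ∀ y ∈ G, L x = L y → x = y) ∧
      (∀ s ∈ S, ∀ i, 0 ≤ L s i) ∧
      (∀ x ∈ G, ((∀ i, 0 ≤ L x i) ↔ ∃ k : ℕ, 1 ≤ k ∧ (k : ℕ) • x ∈ S)) := by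
  classical
  obtain ⟨T, hT⟩ := hSfg
  set l : List (Fin n → ℤ) := T.toList with hl
  set r : ℕ := l.length with hr
  set sgen : Fin r → (Fin n → ℤ) := fun i => l.get i with hsgen
  have hsgenS : ∀ i, sgen i ∈ S := by
    intro i
    rw [← hT]
    refine AddSubmonoid.subset_closure ?_
    have : sgen i ∈ l := List.get_mem l i
    simpa [hl, Finset.mem_toList] using this
  -- every element of S is a nonnegative integer combination of the generators
  have hdecomp : ∀ s ∈ S, ∃ μ : Fin r → ℕ, s = ∑ i, μ i • sgen i := by
    intro s hs
    rw [← hT] at hs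
    induction hs using AddSubmonoid.closure_induction with
    | mem x hx =>
      have hxl : x ∈ l := by simpa [hl, Finset.mem_toList] using hx
      obtain ⟨i, hi⟩ := List.mem_iff_get.mp hxl
      refine ⟨fun j => if j = i then 1 else 0, ?_⟩
      rw [show x = sgen i from hi.symm]
      simp [ite_smul]
    | zero => exact ⟨0, by simp⟩
    | add x y hx hy ihx ihy =>
      obtain ⟨μx, hμx⟩ := ihx
      obtain ⟨μy, hμy⟩ := ihy
      refine ⟨μx + μy, ?_⟩
      rw [hμx, hμy, ← Finset.sum_add_distrib]
      exact Finset.sum_congr rfl (fun i _ => by simp [add_smul])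
  have memS_sum : ∀ μ : Fin r → ℕ, (∑ i, μ i • sgen i) ∈ S := by
    intro μ
    exact sum_mem (fun i _ => nsmul_mem (hsgenS i) (μ i))
  -- the linear inequalities describing cone membership
  have hexists : ∃ Φ : List (((Fin r → ℚ) × (Fin n → ℚ)) →ₗ[ℚ] ℚ), ∀ lam x,
      (∀ φ ∈ Φ, 0 ≤ φ (lam, x)) ↔
        ((∀ i, 0 ≤ lam i) ∧ ∀ j, (∑ i, (sgen i j : ℚ) * lam i) = x j) := by
    refine ⟨((List.finRange r).map
          (fun i => (LinearMap.proj i).comp (LinearMap.fst ℚ (Fin r → ℚ) (Fin n → ℚ))))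
      ++ ((List.finRange n).map (fun j =>
          (∑ i, ((sgen i j : ℚ)) •
              ((LinearMap.proj i).comp (LinearMap.fst ℚ (Fin r → ℚ) (Fin n → ℚ))))
            - (LinearMap.proj j).comp (LinearMap.snd ℚ (Fin r → ℚ) (Fin n → ℚ))))
      ++ ((List.finRange n).map (fun j =>
          (LinearMap.proj j).comp (LinearMap.snd ℚ (Fin r → ℚ) (Fin n → ℚ))
            - ∑ i, ((sgen i j : ℚ)) •
              ((LinearMap.proj i).comp (LinearMap.fst ℚ (Fin r → ℚ) (Fin n → ℚ))))), ?_⟩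
    intro lam x
    constructor
    · intro h
      constructor
      · intro i
        have := h _ (List.mem_append.mpr (Or.inl (List.mem_append.mpr (Or.inl
          (List.mem_map_of_mem (List.mem_finRange i))))))
        simpa using this
      · intro j
        have h1 := h _ (List.mem_append.mpr (Or.inl (List.mem_append.mpr (Or.inr
          (List.mem_map_of_mem (List.mem_finRange j))))))
        have h2 := h _ (List.mem_append.mpr (Or.inr
          (List.mem_map_of_mem (List.mem_finRange j))))
        simp only [LinearMap.sub_apply, LinearMap.sum_apply, LinearMap.smul_apply,
          LinearMap.comp_apply, LinearMap.fst_apply, LinearMap.snd_apply,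
          LinearMap.proj_apply, smul_eq_mul] at h1 h2
        linarith
    · rintro ⟨h1, h2⟩ φ hφ
      rcases List.mem_append.mp hφ with hAB | hC
      · rcases List.mem_append.mp hAB with hA | hB
        · obtain ⟨i, _, rfl⟩ := List.mem_map.mp hA
          simpa using h1 i
        · obtain ⟨j, _, rfl⟩ := List.mem_map.mp hB
          simp only [LinearMap.sub_apply, LinearMap.sum_apply, LinearMap.smul_apply,
            LinearMap.comp_apply, LinearMap.fst_apply, LinearMap.snd_apply,
            LinearMap.proj_apply, smul_eq_mul]
          rw [h2 j]
          simp
      · obtain ⟨j, _, rfl⟩ := List.mem_map.mp hC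
        simp only [LinearMap.sub_apply, LinearMap.sum_apply, LinearMap.smul_apply,
          LinearMap.comp_apply, LinearMap.fst_apply, LinearMap.snd_apply,
          LinearMap.proj_apply, smul_eq_mul]
        rw [h2 j]
        simp
  obtain ⟨Φ, hΦ⟩ := hexists
  obtain ⟨Ψ, hΨ⟩ := fm_multi r Φ
  have hcone : ∀ x : Fin n → ℚ, (∀ ψ ∈ Ψ, 0 ≤ ψ x) ↔
      ∃ lam : Fin r → ℚ, (∀ i, 0 ≤ lam i) ∧ ∀ j, (∑ i, (sgen i j : ℚ) * lam i) = x j := by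
    intro x
    rw [← hΨ x]
    exact exists_congr (fun lam => hΦ lam x)
  choose Nf df hNpos hdf using fun ψ : (Fin n → ℚ) →ₗ[ℚ] ℚ => clear_den_lin ψ
  set L : (Fin n → ℤ) →ₗ[ℤ] (Fin (n + Ψ.length) → ℤ) := LinearMap.pi (fun p => Fin.addCases
      (fun i : Fin n => LinearMap.proj i)
      (fun j : Fin Ψ.length => ∑ i, (df (Ψ.get j) i) •
        (LinearMap.proj i : (Fin n → ℤ) →ₗ[ℤ] ℤ)) p) with hLdef
  have hL1 : ∀ (x : Fin n → ℤ) (i : Fin n), L x (Fin.castAdd Ψ.length i) = x i := by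
    intro x i
    rw [hLdef]
    simp [LinearMap.pi_apply, Fin.addCases_left]
  have hL2 : ∀ (x : Fin n → ℤ) (j : Fin Ψ.length),
      L x (Fin.natAdd n j) = ∑ i, df (Ψ.get j) i * x i := by
    intro x j
    rw [hLdef]
    simp [LinearMap.pi_apply, Fin.addCases_right, LinearMap.sum_apply, LinearMap.smul_apply,
      LinearMap.proj_apply, smul_eq_mul]
  have hsign : ∀ (x : Fin n → ℤ) (j : Fin Ψ.length),
      (0 ≤ L x (Fin.natAdd n j) ↔ 0 ≤ Ψ.get j (fun k => (x k : ℚ))) := by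
    intro x j
    rw [hL2]
    have hpos : (0:ℚ) < (Nf (Ψ.get j) : ℚ) := by exact_mod_cast hNpos (Ψ.get j)
    constructor
    · intro h
      have hq : (0:ℚ) ≤ (Nf (Ψ.get j) : ℚ) * Ψ.get j (fun k => (x k : ℚ)) := by
        rw [← hdf (Ψ.get j) x]
        exact_mod_cast h
      exact le_of_mul_le_mul_left (by linarith) hpos
    · intro h
      have hq : (0:ℚ) ≤ ((∑ i, df (Ψ.get j) i * x i : ℤ) : ℚ) := by
        rw [hdf]
        exact mul_nonneg hpos.le h
      exact_mod_cast hq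
  have hall : ∀ x : Fin n → ℤ,
      (∀ p, 0 ≤ L x p) ↔ ((∀ i, 0 ≤ x i) ∧ ∀ ψ ∈ Ψ, 0 ≤ ψ (fun k => (x k : ℚ))) := by
    intro x
    constructor
    · intro h
      refine ⟨fun i => by rw [← hL1 x i]; exact h _, fun ψ hψ => ?_⟩
      obtain ⟨j, hj⟩ := List.mem_iff_get.mp hψ
      rw [← hj]
      exact (hsign x j).mp (h _)
    · rintro ⟨h1, h2⟩ p
      refine Fin.addCases (fun i => ?_) (fun j => ?_) p
      · rw [hL1]; exact h1 i
      · exact (hsign x j).mpr (h2 _ (Ψ.get_mem j))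
  have key2 : ∀ s ∈ S, ∀ p, 0 ≤ L s p := by
    intro s hs
    obtain ⟨μ, hμ⟩ := hdecomp s hs
    refine (hall s).mpr ⟨fun i => hSnonneg s hs i, ?_⟩
    rw [hcone]
    refine ⟨fun i => (μ i : ℚ), fun i => by positivity, fun j => ?_⟩
    rw [hμ]
    rw [Finset.sum_apply]
    simp only [Pi.smul_apply, nsmul_eq_mul]
    push_cast
    exact Finset.sum_congr rfl (fun i _ => by ring)
  refine ⟨n + Ψ.length, L, ?_, ?_, ?_⟩
  · intro x _ y _ hxy
    funext i
    rw [← hL1 x i, ← hL1 y i, hxy]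
  · intro s hs i
    exact key2 s hs i
  · intro x _
    constructor
    · intro h
      obtain ⟨lam, hlam0, hlameq⟩ := (hcone _).mp ((hall x).mp h).2
      obtain ⟨K, e, hK, hKe⟩ := clear_den_vec lam
      have he0 : ∀ i, 0 ≤ e i := by
        intro i
        have : (0:ℚ) ≤ (e i : ℚ) := by
          rw [hKe]
          exact mul_nonneg (by positivity) (hlam0 i)
        exact_mod_cast this
      refine ⟨K, hK, ?_⟩
      have hx : (K : ℕ) • x = ∑ i, (e i).toNat • sgen i := by
        funext j
        have lhs : ((K:ℕ) • x) j = (K:ℤ) * x j := by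
          simp [Pi.smul_apply, nsmul_eq_mul]
        have rhs : (∑ i, (e i).toNat • sgen i) j = ∑ i, ((e i).toNat : ℤ) * sgen i j := by
          simp [Finset.sum_apply, Pi.smul_apply, nsmul_eq_mul]
        rw [lhs, rhs]
        have hcast : (((K:ℤ) * x j : ℤ) : ℚ) = ((∑ i, ((e i).toNat : ℤ) * sgen i j : ℤ) : ℚ) := by
          push_cast
          rw [← hlameq j, Finset.mul_sum]
          refine Finset.sum_congr rfl (fun i _ => ?_)
          have ht : (((e i).toNat : ℕ) : ℚ) = (K:ℚ) * lam i := by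
            rw [← hKe i]
            exact_mod_cast congrArg (fun z : ℤ => (z : ℚ)) (Int.toNat_of_nonneg (he0 i))
          rw [ht]
          ring
        exact_mod_cast hcast
      rw [hx]
      exact memS_sum _
    · rintro ⟨k, hk, hkS⟩ p
      have h0 := key2 _ hkS p
      rw [map_nsmul] at h0
      have h1 : (0:ℤ) ≤ (k:ℤ) * L x p := by
        simpa [Pi.smul_apply, nsmul_eq_mul] using h0
      have hk1 : (0:ℤ) < (k:ℤ) := by exact_mod_cast hk
      nlinarith [h1, hk1, mul_self_nonneg (L x p)]
end
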